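/- arXiv:math/0110210 — 3 statements merged into one kernel-verified Lean document; each statement's English description precedes it below -/
import Mathlib

section
/- Let G be a finitely generated group, H₁,…,Hₙ finitely generated subgroups, Xᵢ a nontrivial Hᵢ-almost invariant subset of G for each i, with the family in good position. Then the set P of cross-connected components of Ē, with the betweenness relation ABC, is a pretree: (T0) ABC implies A ≠ C; (T1) ABC implies CBA; (T2) ABC implies not ACB; (T3) if ABC and D ≠ B then ABD or DBC. Moreover left translation induces an action of G on P which preserves betweenness. -/
section Defs

variable {G : Type*} [Group G]

/-- `W` is `H`-finite: contained in finitely many left cosets `Hg` of `H` in `G`. -/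
def HFinite (H : Subgroup G) (W : Set G) : Prop :=
  ∃ F : Finset G, W ⊆ ⋃ g ∈ F, (· * g) '' (H : Set G)

/-- The left translate `gX` of a subset `X` of `G`. -/
def leftTr (g : G) (X : Set G) : Set G := (g * ·) '' X

/-- `X` is an `H`-almost invariant subset of `G`: `HX = X` and for every `g` the
symmetric difference of `X` and `Xg` is `H`-finite. -/
def AlmostInv (H : Subgroup G) (X : Set G) : Prop :=
  (∀ h ∈ H, leftTr h X = X) ∧ ∀ g : G, HFinite H (symmDiff X ((· * g) '' X))

/-- `X` is a nontrivial `H`-almost invariant subset of `G`. -/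
def NontrivialAI (H : Subgroup G) (X : Set G) : Prop :=
  AlmostInv H X ∧ ¬ HFinite H X ∧ ¬ HFinite H Xᶜ

/-- `Y` crosses the `H`-almost invariant set `X`: none of the four corner sets is `H`-finite. -/
def Crosses (H : Subgroup G) (X Y : Set G) : Prop :=
  ¬ HFinite H (X ∩ Y) ∧ ¬ HFinite H (X ∩ Yᶜ) ∧ ¬ HFinite H (Xᶜ ∩ Y) ∧ ¬ HFinite H (Xᶜ ∩ Yᶜ)

/-- The coboundary `∂Y` of `Y` with respect to a finite generating set `S`. -/
def bdry (S : Finset G) (Y : Set G) : Set G :=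
  {g : G | ∃ s ∈ (S : Set G) ∪ (S : Set G)⁻¹, (g ∈ Y) ≠ (g * s ∈ Y)}

/-- `Y` crosses the `H`-almost invariant set `X` strongly: neither `∂Y ∩ X` nor
`∂Y ∩ X*` is `H`-finite. -/
def CrossesStrongly (S : Finset G) (H : Subgroup G) (X Y : Set G) : Prop :=
  ¬ HFinite H (bdry S Y ∩ X) ∧ ¬ HFinite H (bdry S Y ∩ Xᶜ)

/-- Two subsets of `G` are nested if one of the four corner sets is empty. -/
def Nested (U V : Set G) : Prop :=
  U ∩ V = ∅ ∨ U ∩ Vᶜ = ∅ ∨ Uᶜ ∩ V = ∅ ∨ Uᶜ ∩ Vᶜ = ∅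

/-- The conjugate subgroup `gHg⁻¹`. -/
def conjSub (g : G) (H : Subgroup G) : Subgroup G :=
  Subgroup.map (MulAut.conj g).toMonoidHom H

/-- A subgroup is two-ended if it contains an infinite cyclic subgroup of finite index. -/
def TwoEnded (H : Subgroup G) : Prop :=
  ∃ z : G, z ∈ H ∧ ¬ IsOfFinOrder z ∧ (Subgroup.zpowers z).relIndex H ≠ 0

/-- `G` is one-ended: `G` is infinite and every almost invariant subset of `G` (over the
trivial group) is finite or cofinite. -/
def OneEnded (G : Type*) [Group G] : Prop :=
  Infinite G ∧ ∀ X : Set G,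
    (∀ g : G, (symmDiff X ((· * g) '' X)).Finite) → X.Finite ∨ Xᶜ.Finite

/-- `G` is finitely presented. -/
def FinitelyPresentedGroup (G : Type*) [Group G] : Prop :=
  ∃ (n : ℕ) (R : Finset (FreeGroup (Fin n))),
    Nonempty (G ≃* FreeGroup (Fin n) ⧸ Subgroup.normalClosure (R : Set (FreeGroup (Fin n))))

/-- `Q(H)`: the collection of subsets of `G` which are almost invariant over some subgroup
commensurable with `H`. -/
def QH (H : Subgroup G) : Set (Set G) :=
  {X : Set G | ∃ K : Subgroup G, Subgroup.Commensurable K H ∧ AlmostInv K X}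

/-- The Boolean algebra of subsets of `G` generated by a family `S` of subsets: the smallest
family containing `S` closed under complementation, finite intersections and finite unions. -/
inductive BoolGen (S : Set (Set G)) : Set G → Prop
  | basic {U : Set G} : U ∈ S → BoolGen S U
  | compl {U : Set G} : BoolGen S U → BoolGen S Uᶜ
  | inter {U V : Set G} : BoolGen S U → BoolGen S V → BoolGen S (U ∩ V)
  | union {U V : Set G} : BoolGen S U → BoolGen S V → BoolGen S (U ∪ V)

/-- A subgroup is virtually free abelian of rank `m` if it has a finite index subgroup
isomorphic to `ℤ^m`. -/
def VirtuallyFreeAbelian (H : Subgroup G) (m : ℕ) : Prop :=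
  ∃ K : Subgroup G, K ≤ H ∧ K.relIndex H ≠ 0 ∧ Nonempty (K ≃* Multiplicative (Fin m → ℤ))

/-- `X` is `n`-canonical with respect to abelian groups: no translate of `X` crosses a
nontrivial almost invariant set over a virtually free abelian subgroup of rank at most `n`. -/
def NCanonicalAb (n : ℕ) (X : Set G) : Prop :=
  ∀ (L : Subgroup G) (m : ℕ), m ≤ n → VirtuallyFreeAbelian L m →
    ∀ Z : Set G, AlmostInv L Z → ¬ HFinite L Z → ¬ HFinite L Zᶜ →
      ∀ g : G, ¬ Crosses L Z (leftTr g X)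

variable {ι : Type*}

/-- The set `E` of all translates of the sets `X i` and of their complements. -/
def Translates (X : ι → Set G) : Set (Set G) :=
  {U : Set G | ∃ (g : G) (i : ι), U = leftTr g (X i) ∨ U = (leftTr g (X i))ᶜ}

/-- `W` is small for the element `U` of `E`: `W` is finite over the group `gHᵢg⁻¹`
associated to `U`. -/
def SmallOver (H : ι → Subgroup G) (X : ι → Set G) (U W : Set G) : Prop :=
  ∃ (g : G) (i : ι), (U = leftTr g (X i) ∨ U = (leftTr g (X i))ᶜ) ∧
    HFinite (conjSub g (H i)) W

/-- The four corner sets `U^{(*)} ∩ V^{(*)}`, indexed by pairs of booleans. -/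
def corner (U V : Set G) (p : Bool × Bool) : Set G :=
  (cond p.1 U Uᶜ) ∩ (cond p.2 V Vᶜ)

/-- Condition (*): the family is in good position: whenever two of the four corner sets
of a pair of elements of `E` are small, one of the corner sets is empty. -/
def GoodPosition (H : ι → Subgroup G) (X : ι → Set G) : Prop :=
  ∀ U ∈ Translates X, ∀ V ∈ Translates X,
    ∀ p q : Bool × Bool, p ≠ q →
      SmallOver H X U (corner U V p) → SmallOver H X U (corner U V q) →
        ∃ r : Bool × Bool, corner U V r = ∅

/-- The relation `U ≤ V` on `E`: `U ∩ V*` is empty or is the only small corner set. -/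
def eLE (H : ι → Subgroup G) (X : ι → Set G) (U V : Set G) : Prop :=
  U ∩ Vᶜ = ∅ ∨
    (SmallOver H X U (U ∩ Vᶜ) ∧
      ∀ p : Bool × Bool, p ≠ (true, false) → ¬ SmallOver H X U (corner U V p))

/-- The relation `U < V` on `E`. -/
def eLT (H : ι → Subgroup G) (X : ι → Set G) (U V : Set G) : Prop :=
  eLE H X U V ∧ U ≠ V

/-- `V` crosses the element `U` of `E`: no corner set is small. -/
def CrossesE (H : ι → Subgroup G) (X : ι → Set G) (U V : Set G) : Prop :=
  ∀ p : Bool × Bool, ¬ SmallOver H X U (corner U V p)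

/-- `V` crosses the element `U` of `E` strongly. -/
def StronglyCrossesE (S : Finset G) (H : ι → Subgroup G) (X : ι → Set G) (U V : Set G) : Prop :=
  ∃ (g : G) (i : ι), (U = leftTr g (X i) ∨ U = (leftTr g (X i))ᶜ) ∧
    ¬ HFinite (conjSub g (H i)) (bdry S V ∩ U) ∧ ¬ HFinite (conjSub g (H i)) (bdry S V ∩ Uᶜ)

/-- The relation on `E` generating the cross-connected components of `Ē`: two elements are
related if they coincide, are complementary, or cross. -/
def ccRelSet (H : ι → Subgroup G) (X : ι → Set G) (U V : Set G) : Prop :=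
  U ∈ Translates X ∧ V ∈ Translates X ∧ (U = V ∨ U = Vᶜ ∨ CrossesE H X U V)

/-- `U` and `V` determine the same cross-connected component of `Ē`. -/
def SameCCC (H : ι → Subgroup G) (X : ι → Set G) (U V : Set G) : Prop :=
  Relation.EqvGen (ccRelSet H X) U V

/-- `V̄` lies between `Ū` and `W̄` in `Ē`: some representatives satisfy `u < v < w`. -/
def BetweenBar (H : ι → Subgroup G) (X : ι → Set G) (U V W : Set G) : Prop :=
  ∃ u v w : Set G, (u = U ∨ u = Uᶜ) ∧ (v = V ∨ v = Vᶜ) ∧ (w = W ∨ w = Wᶜ) ∧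
    eLT H X u v ∧ eLT H X v w

/-- The setoid on `E` whose classes are the cross-connected components of `Ē`. -/
def cccSetoid (H : ι → Subgroup G) (X : ι → Set G) :
    Setoid {U : Set G // U ∈ Translates X} where
  r u v := SameCCC H X u.1 v.1
  iseqv := by
    refine ⟨fun u => Relation.EqvGen.refl _, ?_, ?_⟩
    · exact fun h => Relation.EqvGen.symm _ _ h
    · exact fun h₁ h₂ => Relation.EqvGen.trans _ _ _ h₁ h₂

theorem leftTr_leftTr (g g' : G) (X : Set G) : leftTr g (leftTr g' X) = leftTr (g * g') X := by
  simp only [leftTr, Set.image_image, mul_assoc]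

theorem leftTr_compl (g : G) (X : Set G) : leftTr g Xᶜ = (leftTr g X)ᶜ :=
  Set.image_compl_eq (Group.mulLeft_bijective g)

/-- Left translation as a map from `E` to `E`. -/
def translateE (X : ι → Set G) (g : G) (u : {U : Set G // U ∈ Translates X}) :
    {U : Set G // U ∈ Translates X} :=
  ⟨leftTr g u.1, by
    obtain ⟨g', i, h | h⟩ := u.2
    · exact ⟨g * g', i, Or.inl (by rw [h, leftTr_leftTr])⟩
    · exact ⟨g * g', i, Or.inr (by rw [h, leftTr_compl, leftTr_leftTr])⟩⟩

/-- Betweenness for cross-connected components: `B` lies between the distinct components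
`A` and `C` if there are elements enclosed by them with `u < v < w`. -/
def BetweenCCC (H : ι → Subgroup G) (X : ι → Set G)
    (A B C : Quotient (cccSetoid H X)) : Prop :=
  A ≠ B ∧ B ≠ C ∧ A ≠ C ∧
    ∃ u v w : {U : Set G // U ∈ Translates X},
      Quotient.mk (cccSetoid H X) u = A ∧ Quotient.mk (cccSetoid H X) v = B ∧
        Quotient.mk (cccSetoid H X) w = C ∧
        eLT H X u.1 v.1 ∧ eLT H X v.1 w.1

/-- The half-tree `Y_s` determined by the oriented edge `s = (u,v)`: the vertices
reachable from the terminal vertex `v` after deleting the edge `{u,v}`. -/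
def halfTree {V : Type*} (T : SimpleGraph V) (u v : V) : Set V :=
  {w : V | (T.deleteEdges {s(u, v)}).Reachable v w}

/-- With respect to a base vertex `b`, the subset `Z_s` of `G` determined by the
oriented edge `s = (u,v)`. -/
def Zset {V : Type*} [MulAction G V] (T : SimpleGraph V) (b u v : V) : Set G :=
  {g : G | g • b ∈ halfTree T u v}

/-- The vertex `v` encloses the `H`-almost invariant set `A`: for every edge `s`
oriented towards `v`, either `A ∩ Z_s*` or `A* ∩ Z_s*` is `H`-finite. -/
def Encloses {V : Type*} [MulAction G V] (T : SimpleGraph V) (b : V) (H : Subgroup G)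
    (v : V) (A : Set G) : Prop :=
  ∀ u : V, T.Adj u v → HFinite H (A ∩ (Zset T b u v)ᶜ) ∨ HFinite H (Aᶜ ∩ (Zset T b u v)ᶜ)

end Defs

section SSAux

open scoped Pointwise

variable {G : Type*} [Group G]

theorem hfin_iff {K : Subgroup G} {W : Set G} :
    HFinite K W ↔ ∃ F : Finset G, ∀ x ∈ W, ∃ h ∈ K, ∃ f ∈ F, x = h * f := by
  constructor
  · rintro ⟨F, hF⟩
    refine ⟨F, fun x hx => ?_⟩
    have := hF hx
    simp only [Set.mem_iUnion, Set.mem_image, SetLike.mem_coe] at this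
    obtain ⟨f, hf, h, hh, rfl⟩ := this
    exact ⟨h, hh, f, hf, rfl⟩
  · rintro ⟨F, hF⟩
    refine ⟨F, fun x hx => ?_⟩
    obtain ⟨h, hh, f, hf, rfl⟩ := hF x hx
    simp only [Set.mem_iUnion, Set.mem_image, SetLike.mem_coe]
    exact ⟨f, hf, h, hh, rfl⟩

theorem hfin_mono {K : Subgroup G} {W W' : Set G} (h : W' ⊆ W) (hf : HFinite K W) :
    HFinite K W' := by
  obtain ⟨F, hF⟩ := hf
  exact ⟨F, h.trans hF⟩

theorem hfin_empty (K : Subgroup G) : HFinite K (∅ : Set G) :=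
  ⟨∅, by simp⟩

theorem hfin_union {K : Subgroup G} {W1 W2 : Set G} (h1 : HFinite K W1) (h2 : HFinite K W2) :
    HFinite K (W1 ∪ W2) := by
  classical
  obtain ⟨F1, hF1⟩ := hfin_iff.1 h1
  obtain ⟨F2, hF2⟩ := hfin_iff.1 h2
  refine hfin_iff.2 ⟨F1 ∪ F2, fun x hx => ?_⟩
  rcases hx with hx | hx
  · obtain ⟨h, hh, f, hf, rfl⟩ := hF1 x hx
    exact ⟨h, hh, f, Finset.mem_union_left _ hf, rfl⟩
  · obtain ⟨h, hh, f, hf, rfl⟩ := hF2 x hx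
    exact ⟨h, hh, f, Finset.mem_union_right _ hf, rfl⟩

theorem hfin_biUnion {K : Subgroup G} (F : Finset G) (f : G → Set G)
    (h : ∀ s ∈ F, HFinite K (f s)) : HFinite K (⋃ s ∈ F, f s) := by
  classical
  induction F using Finset.induction with
  | empty => simpa using hfin_empty K
  | @insert a F ha ih =>
    rw [Finset.set_biUnion_insert]
    exact hfin_union (h a (Finset.mem_insert_self a F))
      (ih fun s hs => h s (Finset.mem_insert_of_mem hs))

theorem mem_leftTr {g x : G} {X : Set G} : x ∈ leftTr g X ↔ g⁻¹ * x ∈ X := by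
  constructor
  · rintro ⟨y, hy, rfl⟩; simpa using hy
  · intro h; exact ⟨g⁻¹ * x, h, by group⟩

theorem leftTr_one' (X : Set G) : leftTr 1 X = X := by
  ext x; simp [mem_leftTr]

theorem leftTr_inter (g : G) (A B : Set G) : leftTr g (A ∩ B) = leftTr g A ∩ leftTr g B := by
  ext x; simp [mem_leftTr]

theorem leftTr_union (g : G) (A B : Set G) : leftTr g (A ∪ B) = leftTr g A ∪ leftTr g B := by
  ext x; simp [mem_leftTr]

theorem leftTr_diff (g : G) (A B : Set G) : leftTr g (A \ B) = leftTr g A \ leftTr g B := by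
  ext x; simp [mem_leftTr, Set.mem_diff]

theorem leftTr_empty (g : G) : leftTr g (∅ : Set G) = ∅ := by
  ext x; simp [mem_leftTr]

theorem leftTr_inj {g : G} {A B : Set G} (h : leftTr g A = leftTr g B) : A = B := by
  have := congrArg (leftTr g⁻¹) h
  rwa [leftTr_leftTr, leftTr_leftTr, inv_mul_cancel, leftTr_one', leftTr_one'] at this

theorem mem_conjSub {a x : G} {K : Subgroup G} :
    x ∈ conjSub a K ↔ ∃ h ∈ K, a * h * a⁻¹ = x := by
  simp [conjSub, Subgroup.mem_map]

theorem conjSub_conjSub (a : G) (K : Subgroup G) : conjSub a⁻¹ (conjSub a K) = K := by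
  ext x
  simp only [mem_conjSub]
  constructor
  · rintro ⟨h, ⟨k, hk, rfl⟩, rfl⟩
    convert hk using 1
    group
  · intro hx
    refine ⟨a * x * a⁻¹, ⟨x, hx, rfl⟩, by group⟩

theorem hfin_conj_fwd {a : G} {K : Subgroup G} {W : Set G} (h : HFinite K W) :
    HFinite (conjSub a K) (leftTr a W) := by
  classical
  obtain ⟨F, hF⟩ := hfin_iff.1 h
  refine hfin_iff.2 ⟨F.image (fun f => a * f), ?_⟩
  rintro x ⟨w, hw, rfl⟩
  obtain ⟨h, hh, f, hf, rfl⟩ := hF w hw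
  refine ⟨a * h * a⁻¹, mem_conjSub.2 ⟨h, hh, rfl⟩, a * f, Finset.mem_image_of_mem _ hf, by group⟩

theorem hfin_conj {a : G} {K : Subgroup G} {W : Set G} :
    HFinite K W ↔ HFinite (conjSub a K) (leftTr a W) := by
  constructor
  · exact hfin_conj_fwd
  · intro h
    have := hfin_conj_fwd (a := a⁻¹) h
    rwa [conjSub_conjSub, leftTr_leftTr, inv_mul_cancel, leftTr_one'] at this

theorem rmul_image_leftTr (a g : G) (X : Set G) :
    (· * g) '' (leftTr a X) = leftTr a ((· * g) '' X) := by
  ext x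
  constructor
  · rintro ⟨y, ⟨z, hz, rfl⟩, rfl⟩
    exact ⟨z * g, ⟨z, hz, rfl⟩, by group⟩
  · rintro ⟨y, ⟨z, hz, rfl⟩, rfl⟩
    exact ⟨a * z, ⟨z, hz, rfl⟩, by group⟩

theorem leftTr_symmDiff (a : G) (A B : Set G) :
    symmDiff (leftTr a A) (leftTr a B) = leftTr a (symmDiff A B) := by
  rw [Set.symmDiff_def, Set.symmDiff_def, leftTr_union, leftTr_diff, leftTr_diff]

theorem almostInv_leftTr {K : Subgroup G} {X : Set G} (a : G) (h : AlmostInv K X) :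
    AlmostInv (conjSub a K) (leftTr a X) := by
  constructor
  · intro h' hh'
    obtain ⟨k, hk, rfl⟩ := mem_conjSub.1 hh'
    rw [leftTr_leftTr]
    have : a * k * a⁻¹ * a = a * k := by group
    rw [this, ← leftTr_leftTr, h.1 k hk]
  · intro g
    rw [rmul_image_leftTr, leftTr_symmDiff]
    exact hfin_conj_fwd (h.2 g)

theorem rmul_image_compl (g : G) (X : Set G) : (· * g) '' Xᶜ = ((· * g) '' X)ᶜ :=
  Set.image_compl_eq (Group.mulRight_bijective g)

theorem almostInv_compl {K : Subgroup G} {X : Set G} (h : AlmostInv K X) : AlmostInv K Xᶜ := by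
  constructor
  · intro k hk
    rw [leftTr_compl, h.1 k hk]
  · intro g
    rw [rmul_image_compl, compl_symmDiff_compl]
    exact h.2 g

theorem bdry_hfin (S : Finset G) {K : Subgroup G} {Y : Set G} (h : AlmostInv K Y) :
    HFinite K (bdry S Y) := by
  classical
  have hsub : bdry S Y ⊆ ⋃ s ∈ (S ∪ S⁻¹ : Finset G), symmDiff Y ((· * s⁻¹) '' Y) := by
    rintro x ⟨s, hs, hne⟩
    have hmem : s ∈ (S ∪ S⁻¹ : Finset G) := by
      rcases hs with hs | hs
      · exact Finset.mem_union_left _ hs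
      · refine Finset.mem_union_right _ ?_
        rw [← Finset.coe_inv] at hs
        exact_mod_cast hs
    have hiff : (x * s ∈ Y) ↔ x ∈ (· * s⁻¹) '' Y := by
      constructor
      · intro hxs; exact ⟨x * s, hxs, by group⟩
      · rintro ⟨y, hy, rfl⟩
        have : y * s⁻¹ * s = y := by group
        rwa [this]
    refine Set.mem_biUnion hmem ?_
    rw [Set.mem_symmDiff]
    by_cases hx : x ∈ Y
    · refine Or.inl ⟨hx, fun hmem' => hne ?_⟩
      have : x * s ∈ Y := hiff.2 hmem'
      simp [hx, this]
    · refine Or.inr ⟨?_, hx⟩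
      by_cases hxs : x * s ∈ Y
      · exact hiff.1 hxs
      · exact absurd (by simp [hx, hxs]) hne
  exact hfin_mono hsub (hfin_biUnion _ _ fun s _ => h.2 s⁻¹)

noncomputable def TT (S : Finset G) : Finset G :=
  letI := Classical.decEq G; S ∪ S⁻¹ ∪ {1}

theorem one_mem_TT (S : Finset G) : (1 : G) ∈ TT S := by
  classical
  simp [TT]

theorem TT_cases {S : Finset G} {t : G} (h : t ∈ TT S) :
    t ∈ (S : Set G) ∪ (S : Set G)⁻¹ ∨ t = 1 := by
  classical
  simp only [TT, Finset.mem_union, Finset.mem_singleton] at h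
  rcases h with (h | h) | h
  · exact Or.inl (Or.inl h)
  · refine Or.inl (Or.inr ?_)
    rw [← Finset.coe_inv]
    exact_mod_cast h
  · exact Or.inr h

theorem TT_inv {S : Finset G} {t : G} (h : t ∈ TT S) : t⁻¹ ∈ TT S := by
  classical
  simp only [TT, Finset.mem_union, Finset.mem_singleton, Finset.mem_inv'] at h ⊢
  rcases h with (h | h) | h
  · exact Or.inl (Or.inr (by simpa using h))
  · exact Or.inl (Or.inl (by simpa using h))
  · exact Or.inr (by simp [h])

noncomputable def pb (S : Finset G) : ℕ → Finset G
  | 0 => {1}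
  | (m+1) => letI := Classical.decEq G
      (pb S m).biUnion (fun y => (TT S).image (fun t => y * t))

theorem mem_pb_zero {S : Finset G} {x : G} : x ∈ pb S 0 ↔ x = 1 := by
  simp [pb]

theorem mem_pb_succ {S : Finset G} {m : ℕ} {x : G} :
    x ∈ pb S (m + 1) ↔ ∃ y ∈ pb S m, ∃ t ∈ TT S, x = y * t := by
  classical
  simp only [pb, Finset.mem_biUnion, Finset.mem_image]
  constructor
  · rintro ⟨y, hy, t, ht, rfl⟩
    exact ⟨y, hy, t, ht, rfl⟩
  · rintro ⟨y, hy, t, ht, rfl⟩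
    exact ⟨y, hy, t, ht, rfl⟩

theorem one_mem_pb (S : Finset G) : ∀ m, (1 : G) ∈ pb S m := by
  intro m
  induction m with
  | zero => simp [mem_pb_zero]
  | succ m ih => exact mem_pb_succ.2 ⟨1, ih, 1, one_mem_TT S, by group⟩

theorem pb_succ_mono {S : Finset G} {m : ℕ} {x : G} (h : x ∈ pb S m) : x ∈ pb S (m + 1) :=
  mem_pb_succ.2 ⟨x, h, 1, one_mem_TT S, by group⟩

theorem pb_mono {S : Finset G} {m m' : ℕ} (hle : m ≤ m') {x : G} (h : x ∈ pb S m) :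
    x ∈ pb S m' := by
  induction m' with
  | zero => rwa [Nat.le_zero.1 hle] at h
  | succ k ih =>
    rcases Nat.lt_or_ge m (k+1) with hlt | hge
    · exact pb_succ_mono (ih (Nat.lt_succ_iff.1 hlt))
    · rwa [Nat.le_antisymm hle hge] at h

theorem pb_mul {S : Finset G} {m m' : ℕ} {x y : G} (hx : x ∈ pb S m) (hy : y ∈ pb S m') :
    x * y ∈ pb S (m + m') := by
  induction m' generalizing y with
  | zero =>
    rw [mem_pb_zero.1 hy, mul_one]
    exact hx
  | succ k ih =>
    obtain ⟨y', hy', t, ht, rfl⟩ := mem_pb_succ.1 hy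
    have : x * (y' * t) = (x * y') * t := by group
    rw [this]
    exact mem_pb_succ.2 ⟨x * y', ih hy', t, ht, rfl⟩

theorem TT_sub_pb_one {S : Finset G} {t : G} (h : t ∈ TT S) : t ∈ pb S 1 :=
  mem_pb_succ.2 ⟨1, one_mem_pb S 0, t, h, by group⟩

theorem pb_inv {S : Finset G} {m : ℕ} {x : G} (h : x ∈ pb S m) : x⁻¹ ∈ pb S m := by
  induction m generalizing x with
  | zero => rw [mem_pb_zero.1 h]; simp [mem_pb_zero]
  | succ k ih =>
    obtain ⟨y, hy, t, ht, rfl⟩ := mem_pb_succ.1 h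
    have h1 : t⁻¹ * y⁻¹ ∈ pb S (1 + k) := pb_mul (TT_sub_pb_one (TT_inv ht)) (ih hy)
    have h2 : (y * t)⁻¹ = t⁻¹ * y⁻¹ := by group
    rw [h2, ]
    rwa [Nat.add_comm] at h1

theorem exists_pb {S : Finset G} (hS : Subgroup.closure (S : Set G) = ⊤) (x : G) :
    ∃ m, x ∈ pb S m := by
  have hx : x ∈ Subgroup.closure (S : Set G) := by rw [hS]; trivial
  induction hx using Subgroup.closure_induction with
  | mem s hs =>
    refine ⟨1, TT_sub_pb_one ?_⟩
    classical
    simp only [TT, Finset.mem_union]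
    exact Or.inl (Or.inl (Finset.mem_coe.1 hs))
  | one => exact ⟨0, by simp [mem_pb_zero]⟩
  | mul a b _ _ iha ihb =>
    obtain ⟨ma, hma⟩ := iha
    obtain ⟨mb, hmb⟩ := ihb
    exact ⟨ma + mb, pb_mul hma hmb⟩
  | inv a _ iha =>
    obtain ⟨ma, hma⟩ := iha
    exact ⟨ma, pb_inv hma⟩

theorem reach_bdry (S : Finset G) {B : Set G} {g : G} :
    ∀ m (p : G), p ∈ pb S m → g ∈ B → g * p ∉ B → ∃ q ∈ pb S m, g * q ∈ bdry S B := by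
  intro m
  induction m with
  | zero =>
    intro p hp hg hgp
    rw [mem_pb_zero.1 hp, mul_one] at hgp
    exact absurd hg hgp
  | succ k ih =>
    intro p hp hg hgp
    obtain ⟨y, hy, t, ht, rfl⟩ := mem_pb_succ.1 hp
    by_cases hgy : g * y ∈ B
    · rcases TT_cases ht with ht' | rfl
      · refine ⟨y, pb_succ_mono hy, t, ht', ?_⟩
        have hne : g * y * t ∉ B := by
          have : g * (y * t) = g * y * t := by group
          rwa [this] at hgp
        intro heq
        rw [heq] at hgy
        exact hne hgy
      · rw [mul_one] at hgp
        exact absurd hgy hgp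
    · obtain ⟨q, hq, hqb⟩ := ih y hy hg hgy
      exact ⟨q, pb_succ_mono hq, hqb⟩

theorem core (S : Finset G) (hS : Subgroup.closure (S : Set G) = ⊤)
    {Kx Ky : Subgroup G} {A B P Q : Set G}
    (hA1 : ∀ h ∈ Kx, leftTr h A = A) (hA2 : ¬ HFinite Kx A)
    (hB : AlmostInv Ky B)
    (hPQ : A ∩ B ⊆ P ∪ Q) (hP : HFinite Kx P) (hQ : HFinite Ky Q) :
    HFinite Ky (A ∩ B) := by
  classical
  by_contra hc
  apply hA2
  obtain ⟨FP, hFP⟩ := hfin_iff.1 hP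
  obtain ⟨FQ, hFQ⟩ := hfin_iff.1 hQ
  obtain ⟨FD, hFD⟩ := hfin_iff.1 (bdry_hfin S hB)
  choose nf hnf using exists_pb (S := S) hS
  set d := FP.sup nf with hd_def
  set e := FQ.sup nf with he_def
  set e' := FD.sup nf with he'_def
  have hFPd : ∀ f ∈ FP, f ∈ pb S d := fun f hf => pb_mono (Finset.le_sup hf) (hnf f)
  have hFQe : ∀ f ∈ FQ, f ∈ pb S e := fun f hf => pb_mono (Finset.le_sup hf) (hnf f)
  have hFDe' : ∀ f ∈ FD, f ∈ pb S e' := fun f hf => pb_mono (Finset.le_sup hf) (hnf f)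
  rw [hfin_iff]
  refine ⟨pb S d, fun x hx => ?_⟩
  obtain ⟨m, hm⟩ := exists_pb hS x
  set M := e' + e + m + d + d with hM_def
  have hgex : ∃ z ∈ A ∩ B, ∀ k ∈ Ky, ∀ f ∈ pb S M, z ≠ k * f := by
    by_contra hall
    push_neg at hall
    exact hc (hfin_iff.2 ⟨pb S M, hall⟩)
  obtain ⟨g, ⟨hgA, hgB⟩, hgK⟩ := hgex
  have hball : ∀ p ∈ pb S (m + d), g * p ∈ B := by
    intro p hp
    by_contra hout
    obtain ⟨q, hq, hqb⟩ := reach_bdry S (m + d) p hp hgB hout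
    obtain ⟨k, hk, f, hf, hgq⟩ := hFD _ hqb
    refine hgK k hk (f * q⁻¹) ?_ ?_
    · have h1 : f * q⁻¹ ∈ pb S (e' + (m + d)) := pb_mul (hFDe' f hf) (pb_inv hq)
      exact pb_mono (by omega) h1
    · have : g = (g * q) * q⁻¹ := by group
      rw [this, hgq]
      group
  have hgP : g ∈ P := by
    rcases hPQ ⟨hgA, hgB⟩ with hp | hq
    · exact hp
    · obtain ⟨k, hk, f, hf, hgq⟩ := hFQ _ hq
      exact absurd hgq (hgK k hk f (pb_mono (by omega) (hFQe f hf)))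
  obtain ⟨h, hh, f, hf, hgf⟩ := hFP _ hgP
  have hhx_A : h * x ∈ A := by
    rw [← hA1 h hh]
    exact ⟨x, hx, rfl⟩
  have hhx_B : h * x ∈ B := by
    have h1 : h * x = g * (f⁻¹ * x) := by rw [hgf]; group
    rw [h1]
    refine hball _ (pb_mono (by omega) (pb_mul (pb_inv (hFPd f hf)) hm : f⁻¹ * x ∈ pb S (d + m)))
  rcases hPQ ⟨hhx_A, hhx_B⟩ with hp | hq
  · obtain ⟨k, hk, f'', hf'', hke⟩ := hFP _ hp
    refine ⟨h⁻¹ * k, mul_mem (inv_mem hh) hk, f'', hFPd f'' hf'', ?_⟩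
    have : x = h⁻¹ * (h * x) := by group
    rw [this, hke]
    group
  · obtain ⟨k, hk, f', hf', hkf⟩ := hFQ _ hq
    exfalso
    refine hgK k hk (f' * x⁻¹ * f) ?_ ?_
    · have h1 : f' * x⁻¹ * f ∈ pb S (e + m + d) :=
        pb_mul (pb_mul (hFQe f' hf') (pb_inv hm)) (hFPd f hf)
      exact pb_mono (by omega) h1
    · have : g = (h * x) * (x⁻¹ * f) := by rw [hgf]; group
      rw [this, hkf]
      group


variable {ι : Type*}

/-- `(g, i)` is a presentation of `U` as a translate. -/
def IsRep (X : ι → Set G) (U : Set G) (g : G) (i : ι) : Prop :=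
  U = leftTr g (X i) ∨ U = (leftTr g (X i))ᶜ

theorem isRep_compl {X : ι → Set G} {U : Set G} {g : G} {i : ι} (h : IsRep X U g i) :
    IsRep X Uᶜ g i := by
  rcases h with h | h
  · exact Or.inr (by rw [h])
  · exact Or.inl (by rw [h, compl_compl])

theorem isRep_orient {X : ι → Set G} {U A : Set G} {g : G} {i : ι} (h : IsRep X U g i)
    (hA : A = U ∨ A = Uᶜ) : IsRep X A g i := by
  rcases hA with rfl | rfl
  · exact h
  · exact isRep_compl h

theorem mem_translates_iff {X : ι → Set G} {U : Set G} :
    U ∈ Translates X ↔ ∃ g i, IsRep X U g i := Iff.rfl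

theorem translates_compl {X : ι → Set G} {U : Set G} (h : U ∈ Translates X) :
    Uᶜ ∈ Translates X := by
  obtain ⟨g, i, hrep⟩ := h
  exact ⟨g, i, isRep_compl hrep⟩

theorem translates_orient {X : ι → Set G} {U A : Set G} (hA : A = U ∨ A = Uᶜ)
    (h : U ∈ Translates X) : A ∈ Translates X := by
  rcases hA with rfl | rfl
  · exact h
  · exact translates_compl h

theorem orient_compl {U A : Set G} (hA : A = U ∨ A = Uᶜ) : Aᶜ = U ∨ Aᶜ = Uᶜ := by
  rcases hA with rfl | rfl
  · exact Or.inr rfl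
  · exact Or.inl (compl_compl U)

theorem rep_props {H : ι → Subgroup G} {X : ι → Set G}
    (hnt : ∀ i, NontrivialAI (H i) (X i)) {U : Set G} {g : G} {i : ι}
    (hrep : IsRep X U g i) :
    AlmostInv (conjSub g (H i)) U ∧ AlmostInv (conjSub g (H i)) Uᶜ ∧
      ¬ HFinite (conjSub g (H i)) U ∧ ¬ HFinite (conjSub g (H i)) Uᶜ := by
  obtain ⟨hai, hnf, hnfc⟩ := hnt i
  have hT : AlmostInv (conjSub g (H i)) (leftTr g (X i)) := almostInv_leftTr g hai
  have hTc : AlmostInv (conjSub g (H i)) (leftTr g (X i))ᶜ := almostInv_compl hT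
  have hnT : ¬ HFinite (conjSub g (H i)) (leftTr g (X i)) := fun h => hnf (hfin_conj.2 h)
  have hnTc : ¬ HFinite (conjSub g (H i)) (leftTr g (X i))ᶜ := by
    rw [← leftTr_compl]
    exact fun h => hnfc (hfin_conj.2 h)
  rcases hrep with rfl | rfl
  · exact ⟨hT, hTc, hnT, hnTc⟩
  · exact ⟨hTc, by rwa [compl_compl], hnTc, by rwa [compl_compl]⟩

theorem smallOver_orient {H : ι → Subgroup G} {X : ι → Set G} {U A W : Set G}
    (hA : A = U ∨ A = Uᶜ) : SmallOver H X U W ↔ SmallOver H X A W := by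
  rcases hA with rfl | rfl
  · exact Iff.rfl
  · constructor
    · rintro ⟨g, i, hrep, hfin⟩
      exact ⟨g, i, isRep_compl hrep, hfin⟩
    · rintro ⟨g, i, hrep, hfin⟩
      exact ⟨g, i, by have h := isRep_compl hrep; rw [compl_compl] at h; exact h, hfin⟩

theorem smallOver_empty {H : ι → Subgroup G} {X : ι → Set G} {U : Set G}
    (hU : U ∈ Translates X) : SmallOver H X U (∅ : Set G) := by
  obtain ⟨g, i, hrep⟩ := hU
  exact ⟨g, i, hrep, hfin_empty _⟩

theorem smallOver_mono {H : ι → Subgroup G} {X : ι → Set G} {U W W' : Set G}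
    (h : W' ⊆ W) (hs : SmallOver H X U W) : SmallOver H X U W' := by
  obtain ⟨g, i, hrep, hfin⟩ := hs
  exact ⟨g, i, hrep, hfin_mono h hfin⟩

theorem not_smallOver_self {H : ι → Subgroup G} {X : ι → Set G}
    (hnt : ∀ i, NontrivialAI (H i) (X i)) {U : Set G} :
    ¬ SmallOver H X U U := by
  rintro ⟨g, i, hrep, hfin⟩
  exact (rep_props hnt hrep).2.2.1 hfin

theorem not_smallOver_compl {H : ι → Subgroup G} {X : ι → Set G}
    (hnt : ∀ i, NontrivialAI (H i) (X i)) {U : Set G} :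
    ¬ SmallOver H X U Uᶜ := by
  rintro ⟨g, i, hrep, hfin⟩
  exact (rep_props hnt hrep).2.2.2 hfin

/-- The key transfer lemma: a small corner is finite over every representative group of
either of the two sides (strengthened form allowing a decomposition `P ∪ Q`). -/
theorem transfer_small_rep (S : Finset G) (hS : Subgroup.closure (S : Set G) = ⊤)
    {H : ι → Subgroup G} {X : ι → Set G} (hnt : ∀ i, NontrivialAI (H i) (X i))
    {U V A B : Set G} {g' : G} {i' : ι}
    (hA : A = U ∨ A = Uᶜ) (hB : B = V ∨ B = Vᶜ) (hrepV : IsRep X V g' i')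
    (hsm : SmallOver H X U (A ∩ B)) : HFinite (conjSub g' (H i')) (A ∩ B) := by
  obtain ⟨g, i, hrepU, hfin⟩ := hsm
  have propsA := rep_props hnt (isRep_orient hrepU hA)
  have propsB := rep_props hnt (isRep_orient hrepV hB)
  exact core S hS propsA.1.1 propsA.2.2.1 propsB.1 (P := A ∩ B) (Q := (∅ : Set G))
    (by simp) hfin (hfin_empty _)

theorem transfer_small (S : Finset G) (hS : Subgroup.closure (S : Set G) = ⊤)
    {H : ι → Subgroup G} {X : ι → Set G} (hnt : ∀ i, NontrivialAI (H i) (X i))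
    {U V A B : Set G}
    (hA : A = U ∨ A = Uᶜ) (hB : B = V ∨ B = Vᶜ) (hV : V ∈ Translates X)
    (hsm : SmallOver H X U (A ∩ B)) : SmallOver H X V (A ∩ B) := by
  obtain ⟨g', i', hrepV⟩ := hV
  exact ⟨g', i', hrepV, transfer_small_rep S hS hnt hA hB hrepV hsm⟩

theorem small_to_own_rep (S : Finset G) (hS : Subgroup.closure (S : Set G) = ⊤)
    {H : ι → Subgroup G} {X : ι → Set G} (hnt : ∀ i, NontrivialAI (H i) (X i))
    {U V A B : Set G} {g : G} {i : ι}
    (hA : A = U ∨ A = Uᶜ) (hB : B = V ∨ B = Vᶜ) (hV : V ∈ Translates X)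
    (hrepU : IsRep X U g i)
    (hsm : SmallOver H X U (A ∩ B)) : HFinite (conjSub g (H i)) (A ∩ B) := by
  have h1 : SmallOver H X V (A ∩ B) := transfer_small S hS hnt hA hB hV hsm
  have h2 : SmallOver H X V (B ∩ A) := by rwa [Set.inter_comm] at h1
  have h3 : HFinite (conjSub g (H i)) (B ∩ A) :=
    transfer_small_rep S hS hnt hB hA hrepU h2
  rwa [Set.inter_comm] at h3

theorem eLE_iff {H : ι → Subgroup G} {X : ι → Set G} {U V : Set G} :
    eLE H X U V ↔ (U ∩ Vᶜ = ∅ ∨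
      (SmallOver H X U (U ∩ Vᶜ) ∧ ¬ SmallOver H X U (U ∩ V) ∧
        ¬ SmallOver H X U (Uᶜ ∩ V) ∧ ¬ SmallOver H X U (Uᶜ ∩ Vᶜ))) := by
  constructor
  · rintro (h | ⟨h1, h2⟩)
    · exact Or.inl h
    · exact Or.inr ⟨h1, h2 (true, true) (by decide), h2 (false, true) (by decide),
        h2 (false, false) (by decide)⟩
  · rintro (h | ⟨h1, h2, h3, h4⟩)
    · exact Or.inl h
    · refine Or.inr ⟨h1, ?_⟩
      rintro ⟨a, b⟩ hp
      cases a <;> cases b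
      · exact h4
      · exact h3
      · exact absurd rfl hp
      · exact h2

theorem crossesE_iff {H : ι → Subgroup G} {X : ι → Set G} {U V : Set G} :
    CrossesE H X U V ↔ (¬ SmallOver H X U (U ∩ V) ∧ ¬ SmallOver H X U (U ∩ Vᶜ) ∧
      ¬ SmallOver H X U (Uᶜ ∩ V) ∧ ¬ SmallOver H X U (Uᶜ ∩ Vᶜ)) := by
  constructor
  · intro h
    exact ⟨h (true, true), h (true, false), h (false, true), h (false, false)⟩
  · rintro ⟨h1, h2, h3, h4⟩ ⟨a, b⟩
    cases a <;> cases b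
    · exact h4
    · exact h3
    · exact h2
    · exact h1

theorem corner_of_orient {U V A B : Set G} (hA : A = U ∨ A = Uᶜ) (hB : B = V ∨ B = Vᶜ) :
    ∃ p : Bool × Bool, corner U V p = A ∩ B := by
  rcases hA with rfl | rfl <;> rcases hB with rfl | rfl
  · exact ⟨(true, true), rfl⟩
  · exact ⟨(true, false), rfl⟩
  · exact ⟨(false, true), rfl⟩
  · exact ⟨(false, false), rfl⟩

theorem corner_orient {U V : Set G} (p : Bool × Bool) :
    (cond p.1 U Uᶜ = U ∨ cond p.1 U Uᶜ = Uᶜ) ∧ (cond p.2 V Vᶜ = V ∨ cond p.2 V Vᶜ = Vᶜ) := by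
  obtain ⟨a, b⟩ := p
  cases a <;> cases b <;> simp

section Order

variable {H : ι → Subgroup G} {X : ι → Set G}

theorem small_union_contraA (S : Finset G) (hS : Subgroup.closure (S : Set G) = ⊤)
    (hnt : ∀ i, NontrivialAI (H i) (X i)) {U V A B : Set G} (hU : U ∈ Translates X) (hV : V ∈ Translates X)
    (hA : A = U ∨ A = Uᶜ) (hB : B = V ∨ B = Vᶜ)
    (h1 : SmallOver H X U (A ∩ B)) (h2 : SmallOver H X U (A ∩ Bᶜ)) : False := by
  obtain ⟨g, i, hrepU⟩ := hU
  have f1 := small_to_own_rep S hS hnt hA hB hV hrepU h1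
  have f2 := small_to_own_rep S hS hnt hA (orient_compl hB) hV hrepU h2
  have hfA : HFinite (conjSub g (H i)) A := by
    rw [← Set.inter_union_compl A B]
    exact hfin_union f1 f2
  exact (rep_props hnt (isRep_orient hrepU hA)).2.2.1 hfA

theorem small_union_contraB (S : Finset G) (hS : Subgroup.closure (S : Set G) = ⊤)
    (hnt : ∀ i, NontrivialAI (H i) (X i)) {U V A B : Set G} (hU : U ∈ Translates X) (hV : V ∈ Translates X)
    (hA : A = U ∨ A = Uᶜ) (hB : B = V ∨ B = Vᶜ)
    (h1 : SmallOver H X U (A ∩ B)) (h2 : SmallOver H X U (Aᶜ ∩ B)) : False := by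
  obtain ⟨g', i', hrepV⟩ := hV
  have f1 := transfer_small_rep S hS hnt hA hB hrepV h1
  have f2 := transfer_small_rep S hS hnt (orient_compl hA) hB hrepV h2
  have hfB : HFinite (conjSub g' (H i')) B := by
    rw [← Set.inter_union_compl B A]
    rw [Set.inter_comm B A, Set.inter_comm B Aᶜ]
    exact hfin_union f1 f2
  exact (rep_props hnt (isRep_orient hrepV hB)).2.2.1 hfB

theorem eLE_flip (S : Finset G) (hS : Subgroup.closure (S : Set G) = ⊤)
    (hnt : ∀ i, NontrivialAI (H i) (X i)) {U V : Set G} (hU : U ∈ Translates X) (hV : V ∈ Translates X)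
    (h : eLE H X U V) : eLE H X Vᶜ Uᶜ := by
  rw [eLE_iff] at h ⊢
  simp only [compl_compl]
  rcases h with h | ⟨s1, n1, n2, n3⟩
  · exact Or.inl (by rw [Set.inter_comm]; exact h)
  · refine Or.inr ⟨?_, ?_, ?_, ?_⟩
    · have := transfer_small S hS hnt (Or.inl rfl) (Or.inr rfl) hV s1
      rw [← smallOver_orient (Or.inr rfl : Vᶜ = V ∨ Vᶜ = Vᶜ)] at *
      rwa [Set.inter_comm] at this
    · intro hsm
      rw [← smallOver_orient (Or.inr rfl : Vᶜ = V ∨ Vᶜ = Vᶜ)] at hsm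
      have := transfer_small S hS hnt (Or.inr rfl) (Or.inr rfl) hU hsm
      rw [Set.inter_comm] at this
      exact n3 this
    · intro hsm
      rw [← smallOver_orient (Or.inr rfl : Vᶜ = V ∨ Vᶜ = Vᶜ)] at hsm
      have := transfer_small S hS hnt (Or.inl rfl) (Or.inr rfl) hU hsm
      rw [Set.inter_comm] at this
      exact n2 this
    · intro hsm
      rw [← smallOver_orient (Or.inr rfl : Vᶜ = V ∨ Vᶜ = Vᶜ)] at hsm
      have := transfer_small S hS hnt (Or.inl rfl) (Or.inl rfl) hU hsm
      rw [Set.inter_comm] at this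
      exact n1 this

theorem subset_of_inter_compl_empty {U V : Set G} (h : U ∩ Vᶜ = ∅) : U ⊆ V := by
  intro x hx
  by_contra hxv
  exact Set.eq_empty_iff_forall_notMem.1 h x ⟨hx, hxv⟩

theorem eLE_antisymm (S : Finset G) (hS : Subgroup.closure (S : Set G) = ⊤)
    (hnt : ∀ i, NontrivialAI (H i) (X i)) {U V : Set G} (hU : U ∈ Translates X) (hV : V ∈ Translates X)
    (h1 : eLE H X U V) (h2 : eLE H X V U) : U = V := by
  rw [eLE_iff] at h1 h2
  rcases h1 with h1e | ⟨s1, n11, n12, n13⟩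
  · rcases h2 with h2e | ⟨s2, n21, n22, n23⟩
    · exact Set.Subset.antisymm (subset_of_inter_compl_empty h1e)
        (subset_of_inter_compl_empty h2e)
    · exfalso
      apply n22
      rw [show Vᶜ ∩ U = ∅ from by rwa [Set.inter_comm] at h1e]
      exact smallOver_empty hV
  · rcases h2 with h2e | ⟨s2, n21, n22, n23⟩
    · exfalso
      apply n12
      rw [show Uᶜ ∩ V = ∅ from by rwa [Set.inter_comm] at h2e]
      exact smallOver_empty hU
    · exfalso
      apply n12
      have := transfer_small S hS hnt (Or.inl rfl) (Or.inr rfl) hU s2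
      rwa [Set.inter_comm] at this

theorem eLE_not_both (S : Finset G) (hS : Subgroup.closure (S : Set G) = ⊤)
    (hnt : ∀ i, NontrivialAI (H i) (X i)) {U V : Set G} (hU : U ∈ Translates X) (hV : V ∈ Translates X)
    (h1 : eLE H X U V) (h2 : eLE H X U Vᶜ) : False := by
  obtain ⟨g, i, hrepU⟩ := hU
  rw [eLE_iff] at h1 h2
  simp only [compl_compl] at h2
  rcases h1 with h1e | ⟨s1, _⟩ <;> rcases h2 with h2e | ⟨s2, _⟩
  · have hUe : U = ∅ := by
      rw [← Set.inter_union_compl U V, h2e, h1e, Set.union_empty]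
    exact (rep_props hnt hrepU).2.2.1 (by rw [hUe]; exact hfin_empty _)
  · have hUV : U ∩ V = U := by
      have h := Set.inter_union_compl U V
      rw [h1e, Set.union_empty] at h
      exact h
    rw [hUV] at s2
    exact not_smallOver_self hnt s2
  · have hUV : U ∩ Vᶜ = U := by
      have h := Set.inter_union_compl U V
      rw [h2e, Set.empty_union] at h
      exact h
    rw [hUV] at s1
    exact not_smallOver_self hnt s1
  · exact small_union_contraA S hS hnt ⟨g, i, hrepU⟩ hV (Or.inl rfl) (Or.inl rfl) s2 s1

theorem not_eLE_self_compl (S : Finset G) (hS : Subgroup.closure (S : Set G) = ⊤)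
    (hnt : ∀ i, NontrivialAI (H i) (X i)) {U : Set G} (hU : U ∈ Translates X) (h : eLE H X U Uᶜ) : False := by
  obtain ⟨g, i, hrepU⟩ := hU
  rw [eLE_iff] at h
  simp only [compl_compl, Set.inter_self] at h
  rcases h with h | ⟨s, _⟩
  · exact (rep_props hnt hrepU).2.2.1 (by rw [h]; exact hfin_empty _)
  · exact not_smallOver_self hnt s

theorem eLE_trans (S : Finset G) (hS : Subgroup.closure (S : Set G) = ⊤)
    (hnt : ∀ i, NontrivialAI (H i) (X i)) (hgood : GoodPosition H X) {U V W : Set G}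
    (hU : U ∈ Translates X) (hV : V ∈ Translates X) (hW : W ∈ Translates X)
    (h1 : eLE H X U V) (h2 : eLE H X V W) : eLE H X U W := by
  obtain ⟨gU, iU, hrepU⟩ := hU
  obtain ⟨gV, iV, hrepV⟩ := hV
  obtain ⟨gW, iW, hrepW⟩ := hW
  have hUmem : U ∈ Translates X := ⟨gU, iU, hrepU⟩
  have hVmem : V ∈ Translates X := ⟨gV, iV, hrepV⟩
  have hWmem : W ∈ Translates X := ⟨gW, iW, hrepW⟩
  rw [eLE_iff] at h1 h2 ⊢
  by_cases hempty : U ∩ Wᶜ = ∅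
  · exact Or.inl hempty
  refine Or.inr ?_
  have hsplit : U ∩ Wᶜ ⊆ (U ∩ Vᶜ) ∪ (V ∩ Wᶜ) := by
    rintro x ⟨hxU, hxW⟩
    by_cases hxV : x ∈ V
    · exact Or.inr ⟨hxV, hxW⟩
    · exact Or.inl ⟨hxU, hxV⟩
  have hPfin : HFinite (conjSub gU (H iU)) (U ∩ Vᶜ) := by
    rcases h1 with h1e | ⟨s1, _⟩
    · rw [h1e]; exact hfin_empty _
    · exact small_to_own_rep S hS hnt (Or.inl rfl) (Or.inr rfl) hVmem hrepU s1
  have hQfin : HFinite (conjSub gW (H iW)) (V ∩ Wᶜ) := by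
    rcases h2 with h2e | ⟨s2, _⟩
    · rw [h2e]; exact hfin_empty _
    · exact transfer_small_rep S hS hnt (Or.inl rfl) (Or.inr rfl) hrepW s2
  have propsU := rep_props hnt hrepU
  have propsW := rep_props hnt hrepW
  have hUW_W : HFinite (conjSub gW (H iW)) (U ∩ Wᶜ) :=
    core S hS propsU.1.1 propsU.2.2.1 propsW.2.1 hsplit hPfin hQfin
  have hUW_U : HFinite (conjSub gU (H iU)) (U ∩ Wᶜ) := by
    have h3 : HFinite (conjSub gU (H iU)) (Wᶜ ∩ U) := by
      refine core S hS propsW.2.1.1 propsW.2.2.2 propsU.1 (P := Wᶜ ∩ U) (Q := (∅ : Set G))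
        (by simp) ?_ (hfin_empty _)
      rwa [Set.inter_comm] at hUW_W
    rwa [Set.inter_comm] at h3
  have s : SmallOver H X U (U ∩ Wᶜ) := ⟨gU, iU, hrepU, hUW_U⟩
  refine ⟨s, ?_, ?_, ?_⟩
  · intro sm
    have f1 := small_to_own_rep S hS hnt (Or.inl rfl) (Or.inl rfl) hWmem hrepU sm
    have : HFinite (conjSub gU (H iU)) U := by
      rw [← Set.inter_union_compl U W]
      exact hfin_union f1 hUW_U
    exact propsU.2.2.1 this
  · intro sm
    -- the good position case : small (U ∩ Wᶜ) and small (Uᶜ ∩ W)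
    obtain ⟨r, hr⟩ := hgood U hUmem W hWmem (true, false) (false, true) (by decide) s sm
    obtain ⟨a, b⟩ := r
    cases a <;> cases b
    · -- Uᶜ ∩ Wᶜ = ∅ : Wᶜ ⊆ U
      exfalso
      have hsub : Wᶜ ⊆ U := by
        intro x hx
        by_contra hxu
        exact Set.eq_empty_iff_forall_notMem.1 hr x ⟨hxu, hx⟩
      have hUWc : U ∩ Wᶜ = Wᶜ := by
        apply Set.Subset.antisymm (Set.inter_subset_right)
        intro x hx
        exact ⟨hsub hx, hx⟩
      rw [hUWc] at hUW_W
      exact propsW.2.2.2 hUW_W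
    · -- Uᶜ ∩ W = ∅ : W ⊆ U, the deep case
      exfalso
      have hWU : W ⊆ U := by
        intro x hx
        by_contra hxu
        exact Set.eq_empty_iff_forall_notMem.1 hr x ⟨hxu, hx⟩
      rcases h2 with h2e | ⟨s2, n21, n22, n23⟩
      · -- V ⊆ W
        have hVW : V ⊆ W := subset_of_inter_compl_empty h2e
        rcases h1 with h1e | ⟨s1, n11, n12, n13⟩
        · -- U ⊆ V ⊆ W : contradicts hempty
          apply hempty
          apply Set.eq_empty_iff_forall_notMem.2
          rintro x ⟨hxU, hxW⟩
          exact hxW (hVW (subset_of_inter_compl_empty h1e hxU))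
        · -- V ⊆ W ⊆ U so Uᶜ ∩ V = ∅, contradicting n12
          apply n12
          rw [show Uᶜ ∩ V = ∅ from Set.eq_empty_iff_forall_notMem.2
            (fun x ⟨hxu, hxv⟩ => hxu (hWU (hVW hxv)))]
          exact smallOver_empty hUmem
      · rcases h1 with h1e | ⟨s1, n11, n12, n13⟩
        · -- U ⊆ V and W ⊆ U, so Vᶜ ∩ W = ∅, contradicting n22
          apply n22
          rw [show Vᶜ ∩ W = ∅ from Set.eq_empty_iff_forall_notMem.2
            (fun x ⟨hxv, hxw⟩ => hxv (subset_of_inter_compl_empty h1e (hWU hxw)))]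
          exact smallOver_empty hVmem
        · -- both small-only
          apply n12
          have hsub2 : V ∩ Uᶜ ⊆ V ∩ Wᶜ := by
            rintro x ⟨hxv, hxu⟩
            refine ⟨hxv, fun hxw => ?_⟩
            exact Set.eq_empty_iff_forall_notMem.1 hr x ⟨hxu, hxw⟩
          have hfinV : HFinite (conjSub gV (H iV)) (V ∩ Wᶜ) :=
            small_to_own_rep S hS hnt (Or.inl rfl) (Or.inr rfl) hWmem hrepV s2
          have hsmV : SmallOver H X V (V ∩ Uᶜ) :=
            ⟨gV, iV, hrepV, hfin_mono hsub2 hfinV⟩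
          have := transfer_small S hS hnt (Or.inl rfl) (Or.inr rfl) hUmem hsmV
          rwa [Set.inter_comm] at this
    · -- U ∩ Wᶜ = ∅ : contradicts hempty
      exact absurd hr hempty
    · -- U ∩ W = ∅ : U ⊆ Wᶜ so U ∩ Wᶜ = U
      exfalso
      have hUWc : U ∩ Wᶜ = U := by
        apply Set.Subset.antisymm (Set.inter_subset_left)
        intro x hx
        refine ⟨hx, fun hxw => ?_⟩
        exact Set.eq_empty_iff_forall_notMem.1 hr x ⟨hx, hxw⟩
      rw [hUWc] at s
      exact not_smallOver_self hnt s
  · intro sm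
    have f1 := transfer_small_rep S hS hnt (Or.inr rfl) (Or.inr rfl) hrepW sm
    have : HFinite (conjSub gW (H iW)) Wᶜ := by
      rw [← Set.inter_union_compl Wᶜ U, Set.inter_comm Wᶜ U, Set.inter_comm Wᶜ Uᶜ]
      exact hfin_union hUW_W f1
    exact propsW.2.2.2 this

end Order

section CCC

variable {H : ι → Subgroup G} {X : ι → Set G}

theorem sameCCC_compl {U : Set G} (hU : U ∈ Translates X) : SameCCC H X U Uᶜ :=
  Relation.EqvGen.rel _ _ ⟨hU, translates_compl hU, Or.inr (Or.inl (compl_compl U).symm)⟩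

theorem sameCCC_orient {U A : Set G} (hU : U ∈ Translates X) (hA : A = U ∨ A = Uᶜ) :
    SameCCC H X U A := by
  rcases hA with rfl | rfl
  · exact Relation.EqvGen.refl _
  · exact sameCCC_compl hU

theorem sameCCC_of_cross {U V : Set G} (hU : U ∈ Translates X) (hV : V ∈ Translates X)
    (h : CrossesE H X U V) : SameCCC H X U V :=
  Relation.EqvGen.rel _ _ ⟨hU, hV, Or.inr (Or.inr h)⟩

theorem cross_symm (S : Finset G) (hS : Subgroup.closure (S : Set G) = ⊤)
    (hnt : ∀ i, NontrivialAI (H i) (X i)) {U V : Set G}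
    (hU : U ∈ Translates X) (hV : V ∈ Translates X)
    (h : CrossesE H X U V) : CrossesE H X V U := by
  rw [crossesE_iff] at h ⊢
  obtain ⟨h1, h2, h3, h4⟩ := h
  refine ⟨?_, ?_, ?_, ?_⟩
  · intro sm
    have := transfer_small S hS hnt (Or.inl rfl) (Or.inl rfl) hU sm
    rw [Set.inter_comm] at this
    exact h1 this
  · intro sm
    have := transfer_small S hS hnt (Or.inl rfl) (Or.inr rfl) hU sm
    rw [Set.inter_comm] at this
    exact h3 this
  · intro sm
    have := transfer_small S hS hnt (Or.inr rfl) (Or.inl rfl) hU sm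
    rw [Set.inter_comm] at this
    exact h2 this
  · intro sm
    have := transfer_small S hS hnt (Or.inr rfl) (Or.inr rfl) hU sm
    rw [Set.inter_comm] at this
    exact h4 this

theorem not_cross_of_not_same {U V : Set G} (hU : U ∈ Translates X) (hV : V ∈ Translates X)
    (h : ¬ SameCCC H X U V) : ¬ CrossesE H X U V :=
  fun hc => h (sameCCC_of_cross hU hV hc)

theorem ne_of_not_same {U V : Set G} (h : ¬ SameCCC H X U V) : U ≠ V := by
  rintro rfl
  exact h (Relation.EqvGen.refl _)

theorem ne_compl_of_not_same {U V : Set G} (hV : V ∈ Translates X)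
    (h : ¬ SameCCC H X U V) : U ≠ Vᶜ := by
  rintro rfl
  exact h (Relation.EqvGen.symm _ _ (sameCCC_compl hV))

theorem at_least_one (S : Finset G) (hS : Subgroup.closure (S : Set G) = ⊤)
    (hnt : ∀ i, NontrivialAI (H i) (X i)) (hgood : GoodPosition H X) {U V : Set G}
    (hU : U ∈ Translates X) (hV : V ∈ Translates X) (hns : ¬ SameCCC H X U V) :
    ∃ A B : Set G, (A = U ∨ A = Uᶜ) ∧ (B = V ∨ B = Vᶜ) ∧ eLE H X A B := by
  classical
  have hnc : ¬ CrossesE H X U V := not_cross_of_not_same hU hV hns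
  obtain ⟨p, hsm⟩ : ∃ p, SmallOver H X U (corner U V p) := by
    by_contra hno
    push_neg at hno
    exact hnc hno
  by_cases hq : ∃ q, q ≠ p ∧ SmallOver H X U (corner U V q)
  · obtain ⟨q, hqp, hsq⟩ := hq
    obtain ⟨r, hr⟩ := hgood U hU V hV p q (fun h => hqp h.symm) hsm hsq
    obtain ⟨a, b⟩ := r
    cases a <;> cases b
    · exact ⟨Uᶜ, V, Or.inr rfl, Or.inl rfl, Or.inl hr⟩
    · exact ⟨Uᶜ, Vᶜ, Or.inr rfl, Or.inr rfl, Or.inl (by rwa [compl_compl])⟩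
    · exact ⟨U, V, Or.inl rfl, Or.inl rfl, Or.inl hr⟩
    · exact ⟨U, Vᶜ, Or.inl rfl, Or.inr rfl, Or.inl (by rwa [compl_compl])⟩
  · push_neg at hq
    obtain ⟨a, b⟩ := p
    cases a <;> cases b
    · -- small corner Uᶜ ∩ Vᶜ : so Uᶜ ≤ V
      refine ⟨Uᶜ, V, Or.inr rfl, Or.inl rfl, eLE_iff.2 (Or.inr ⟨?_, ?_, ?_, ?_⟩)⟩
      · exact (smallOver_orient (Or.inr rfl)).1 hsm
      · intro h
        exact hq (false, true) (by decide) ((smallOver_orient (Or.inr rfl)).2 h)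
      · intro h
        rw [compl_compl] at h
        exact hq (true, true) (by decide) ((smallOver_orient (Or.inr rfl)).2 h)
      · intro h
        rw [compl_compl] at h
        exact hq (true, false) (by decide) ((smallOver_orient (Or.inr rfl)).2 h)
    · -- small corner Uᶜ ∩ V : so Uᶜ ≤ Vᶜ
      refine ⟨Uᶜ, Vᶜ, Or.inr rfl, Or.inr rfl, eLE_iff.2 (Or.inr ⟨?_, ?_, ?_, ?_⟩)⟩
      · rw [compl_compl]
        exact (smallOver_orient (Or.inr rfl)).1 hsm
      · intro h
        exact hq (false, false) (by decide) ((smallOver_orient (Or.inr rfl)).2 h)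
      · intro h
        rw [compl_compl] at h
        exact hq (true, false) (by decide) ((smallOver_orient (Or.inr rfl)).2 h)
      · intro h
        rw [compl_compl, compl_compl] at h
        exact hq (true, true) (by decide) ((smallOver_orient (Or.inr rfl)).2 h)
    · -- small corner U ∩ Vᶜ : so U ≤ V
      refine ⟨U, V, Or.inl rfl, Or.inl rfl, eLE_iff.2 (Or.inr ⟨hsm, ?_, ?_, ?_⟩)⟩
      · exact hq (true, true) (by decide)
      · exact hq (false, true) (by decide)
      · exact hq (false, false) (by decide)
    · -- small corner U ∩ V : so U ≤ Vᶜ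
      refine ⟨U, Vᶜ, Or.inl rfl, Or.inr rfl, eLE_iff.2 (Or.inr ⟨?_, ?_, ?_, ?_⟩)⟩
      · rw [compl_compl]
        exact hsm
      · exact hq (true, false) (by decide)
      · exact hq (false, false) (by decide)
      · intro h
        rw [compl_compl] at h
        exact hq (false, true) (by decide) h

theorem side_clash (S : Finset G) (hS : Subgroup.closure (S : Set G) = ⊤)
    (hnt : ∀ i, NontrivialAI (H i) (X i)) {P Q v p' q' : Set G}
    (hP : P ∈ Translates X) (hQ : Q ∈ Translates X) (hv : v ∈ Translates X)
    (hp' : p' = P ∨ p' = Pᶜ) (hq' : q' = Q ∨ q' = Qᶜ)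
    (h1 : eLE H X p' v) (h2 : eLE H X v q') (hcr : CrossesE H X Q P) : False := by
  have hp'T : p' ∈ Translates X := translates_orient hp' hP
  obtain ⟨gp, ip, hrepp⟩ := hp'T
  obtain ⟨gQ, iQ, hrepQ⟩ := hQ
  rw [eLE_iff] at h1 h2
  have hPfin : HFinite (conjSub gp (H ip)) (p' ∩ vᶜ) := by
    rcases h1 with h1e | ⟨s1, _⟩
    · rw [h1e]; exact hfin_empty _
    · exact small_to_own_rep S hS hnt (Or.inl rfl) (Or.inr rfl) hv hrepp s1
  have hQfin : HFinite (conjSub gQ (H iQ)) (v ∩ q'ᶜ) := by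
    rcases h2 with h2e | ⟨s2, _⟩
    · rw [h2e]; exact hfin_empty _
    · exact transfer_small_rep S hS hnt (Or.inl rfl) (orient_compl hq') hrepQ s2
  have propsp := rep_props hnt hrepp
  have propsq := rep_props hnt (isRep_orient hrepQ (orient_compl hq'))
  have hsplit : p' ∩ q'ᶜ ⊆ (p' ∩ vᶜ) ∪ (v ∩ q'ᶜ) := by
    rintro x ⟨hxp, hxq⟩
    by_cases hxv : x ∈ v
    · exact Or.inr ⟨hxv, hxq⟩
    · exact Or.inl ⟨hxp, hxv⟩
  have hfinal : HFinite (conjSub gQ (H iQ)) (p' ∩ q'ᶜ) :=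
    core S hS propsp.1.1 propsp.2.2.1 propsq.1 hsplit hPfin hQfin
  have hsm : SmallOver H X Q (q'ᶜ ∩ p') := ⟨gQ, iQ, hrepQ, by rwa [Set.inter_comm] at hfinal⟩
  obtain ⟨r, hr⟩ := corner_of_orient (U := Q) (V := P) (orient_compl hq') hp'
  exact hcr r (by rwa [hr])

/-- `v` lies (weakly) below the bar class of `t`. -/
def SideUp (H : ι → Subgroup G) (X : ι → Set G) (v t : Set G) : Prop :=
  eLE H X v t ∨ eLE H X v tᶜ

/-- Some orientation of `t` lies (weakly) below `v`. -/
def SideDn (H : ι → Subgroup G) (X : ι → Set G) (v t : Set G) : Prop :=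
  eLE H X t v ∨ eLE H X tᶜ v

theorem side_eqv (S : Finset G) (hS : Subgroup.closure (S : Set G) = ⊤)
    (hnt : ∀ i, NontrivialAI (H i) (X i)) (hgood : GoodPosition H X) {v : Set G}
    (hv : v ∈ Translates X) {a b : Set G} (hab : SameCCC H X a b) :
    a = b ∨ (a ∈ Translates X ∧ b ∈ Translates X ∧ (¬ SameCCC H X v a →
      ((SideUp H X v a ↔ SideUp H X v b) ∧ (SideDn H X v a ↔ SideDn H X v b)))) := by
  induction hab with
  | rel a b hab =>
    obtain ⟨haT, hbT, hcase⟩ := hab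
    rcases hcase with rfl | rfl | hcross
    · exact Or.inl rfl
    · refine Or.inr ⟨haT, hbT, fun hns => ?_⟩
      constructor
      · show (eLE H X v bᶜ ∨ eLE H X v bᶜᶜ) ↔ (eLE H X v b ∨ eLE H X v bᶜ)
        rw [compl_compl]
        exact or_comm
      · show (eLE H X bᶜ v ∨ eLE H X bᶜᶜ v) ↔ (eLE H X b v ∨ eLE H X bᶜ v)
        rw [compl_compl]
        exact or_comm
    · refine Or.inr ⟨haT, hbT, fun hns => ?_⟩
      have hab' : SameCCC H X a b := Relation.EqvGen.rel _ _ ⟨haT, hbT, Or.inr (Or.inr hcross)⟩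
      have hnsb : ¬ SameCCC H X v b := fun h =>
        hns (Relation.EqvGen.trans _ _ _ h (Relation.EqvGen.symm _ _ hab'))
      have hcrossba : CrossesE H X b a := cross_symm S hS hnt haT hbT hcross
      constructor
      · constructor
        · intro hupa
          obtain ⟨A, B, hA, hB, hle⟩ := at_least_one S hS hnt hgood hv hbT hnsb
          rcases hA with rfl | rfl
          · rcases hB with rfl | rfl
            · exact Or.inl hle
            · exact Or.inr hle
          · -- eLE vᶜ B, flip to get Bᶜ ≤ v, clash with hupa
            exfalso
            have hflip := eLE_flip S hS hnt (translates_compl hv)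
              (translates_orient hB hbT) hle
            rw [compl_compl] at hflip
            rcases hupa with h | h
            · exact side_clash S hS hnt hbT haT hv (orient_compl hB) (Or.inl rfl)
                hflip h hcross
            · exact side_clash S hS hnt hbT haT hv (orient_compl hB) (Or.inr rfl)
                hflip h hcross
        · intro hupb
          obtain ⟨A, B, hA, hB, hle⟩ := at_least_one S hS hnt hgood hv haT hns
          rcases hA with rfl | rfl
          · rcases hB with rfl | rfl
            · exact Or.inl hle
            · exact Or.inr hle
          · exfalso
            have hflip := eLE_flip S hS hnt (translates_compl hv)
              (translates_orient hB haT) hle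
            rw [compl_compl] at hflip
            rcases hupb with h | h
            · exact side_clash S hS hnt haT hbT hv (orient_compl hB) (Or.inl rfl)
                hflip h hcrossba
            · exact side_clash S hS hnt haT hbT hv (orient_compl hB) (Or.inr rfl)
                hflip h hcrossba
      · constructor
        · intro hdna
          obtain ⟨A, B, hA, hB, hle⟩ := at_least_one S hS hnt hgood hv hbT hnsb
          rcases hA with rfl | rfl
          · -- eLE v B : clash with hdna
            exfalso
            rcases hdna with h | h
            · exact side_clash S hS hnt haT hbT hv (Or.inl rfl) hB h hle hcrossba
            · exact side_clash S hS hnt haT hbT hv (Or.inr rfl) hB h hle hcrossba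
          · have hflip := eLE_flip S hS hnt (translates_compl hv)
              (translates_orient hB hbT) hle
            rw [compl_compl] at hflip
            rcases hB with rfl | rfl
            · exact Or.inr hflip
            · exact Or.inl (by rwa [compl_compl] at hflip)
        · intro hdnb
          obtain ⟨A, B, hA, hB, hle⟩ := at_least_one S hS hnt hgood hv haT hns
          rcases hA with rfl | rfl
          · exfalso
            rcases hdnb with h | h
            · exact side_clash S hS hnt hbT haT hv (Or.inl rfl) hB h hle hcross
            · exact side_clash S hS hnt hbT haT hv (Or.inr rfl) hB h hle hcross
          · have hflip := eLE_flip S hS hnt (translates_compl hv)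
              (translates_orient hB haT) hle
            rw [compl_compl] at hflip
            rcases hB with rfl | rfl
            · exact Or.inr hflip
            · exact Or.inl (by rwa [compl_compl] at hflip)
  | refl a => exact Or.inl rfl
  | symm a b hab ih =>
    rcases ih with rfl | ⟨haT, hbT, hiff⟩
    · exact Or.inl rfl
    · refine Or.inr ⟨hbT, haT, fun hnsb => ?_⟩
      have hnsa : ¬ SameCCC H X v a := fun h =>
        hnsb (Relation.EqvGen.trans _ _ _ h hab)
      exact ⟨(hiff hnsa).1.symm, (hiff hnsa).2.symm⟩
  | trans a c b hac hcb ih1 ih2 =>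
    rcases ih1 with rfl | ⟨haT, hcT, hiff1⟩
    · exact ih2
    · rcases ih2 with rfl | ⟨_, hbT, hiff2⟩
      · exact Or.inr ⟨haT, hcT, hiff1⟩
      · refine Or.inr ⟨haT, hbT, fun hnsa => ?_⟩
        have hnsc : ¬ SameCCC H X v a → ¬ SameCCC H X v c := fun h hc =>
          h (Relation.EqvGen.trans _ _ _ hc (Relation.EqvGen.symm _ _ hac))
        exact ⟨(hiff1 hnsa).1.trans ((hiff2 (hnsc hnsa)).1),
          (hiff1 hnsa).2.trans ((hiff2 (hnsc hnsa)).2)⟩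

end CCC

section Translate

variable {H : ι → Subgroup G} {X : ι → Set G}

theorem conjSub_mul (a g : G) (K : Subgroup G) :
    conjSub a (conjSub g K) = conjSub (a * g) K := by
  ext x
  simp only [mem_conjSub]
  constructor
  · rintro ⟨h, ⟨k, hk, rfl⟩, rfl⟩
    exact ⟨k, hk, by group⟩
  · rintro ⟨k, hk, rfl⟩
    exact ⟨g * k * g⁻¹, ⟨k, hk, rfl⟩, by group⟩

theorem isRep_leftTr {U : Set G} {g : G} {i : ι} (a : G) (h : IsRep X U g i) :
    IsRep X (leftTr a U) (a * g) i := by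
  rcases h with rfl | rfl
  · exact Or.inl (by rw [leftTr_leftTr])
  · exact Or.inr (by rw [leftTr_compl, leftTr_leftTr])

theorem leftTr_translates {U : Set G} (a : G) (hU : U ∈ Translates X) :
    leftTr a U ∈ Translates X := by
  obtain ⟨g, i, hrep⟩ := hU
  exact ⟨a * g, i, isRep_leftTr a hrep⟩

theorem smallOver_leftTr_fwd {U W : Set G} (a : G) (h : SmallOver H X U W) :
    SmallOver H X (leftTr a U) (leftTr a W) := by
  obtain ⟨g, i, hrep, hfin⟩ := h
  refine ⟨a * g, i, isRep_leftTr a hrep, ?_⟩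
  rw [← conjSub_mul]
  exact hfin_conj_fwd hfin

theorem smallOver_leftTr {U W : Set G} (a : G) :
    SmallOver H X U W ↔ SmallOver H X (leftTr a U) (leftTr a W) := by
  constructor
  · exact smallOver_leftTr_fwd a
  · intro h
    have := smallOver_leftTr_fwd a⁻¹ h
    rwa [leftTr_leftTr, leftTr_leftTr, inv_mul_cancel, leftTr_one', leftTr_one'] at this

theorem eLE_leftTr {U V : Set G} (a : G) (h : eLE H X U V) :
    eLE H X (leftTr a U) (leftTr a V) := by
  rw [eLE_iff] at h ⊢
  have e1 : leftTr a U ∩ (leftTr a V)ᶜ = leftTr a (U ∩ Vᶜ) := by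
    rw [leftTr_inter, leftTr_compl]
  have e2 : leftTr a U ∩ leftTr a V = leftTr a (U ∩ V) := by rw [leftTr_inter]
  have e3 : (leftTr a U)ᶜ ∩ leftTr a V = leftTr a (Uᶜ ∩ V) := by
    rw [leftTr_inter, leftTr_compl]
  have e4 : (leftTr a U)ᶜ ∩ (leftTr a V)ᶜ = leftTr a (Uᶜ ∩ Vᶜ) := by
    rw [leftTr_inter, leftTr_compl, leftTr_compl]
  rcases h with he | ⟨s1, n1, n2, n3⟩
  · exact Or.inl (by rw [e1, he, leftTr_empty])
  · refine Or.inr ⟨?_, ?_, ?_, ?_⟩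
    · rw [e1]
      exact smallOver_leftTr_fwd a s1
    · intro hsm
      rw [e2] at hsm
      exact n1 ((smallOver_leftTr a).2 hsm)
    · intro hsm
      rw [e3] at hsm
      exact n2 ((smallOver_leftTr a).2 hsm)
    · intro hsm
      rw [e4] at hsm
      exact n3 ((smallOver_leftTr a).2 hsm)

theorem eLT_leftTr {U V : Set G} (a : G) (h : eLT H X U V) :
    eLT H X (leftTr a U) (leftTr a V) := by
  refine ⟨eLE_leftTr a h.1, fun heq => h.2 (leftTr_inj heq)⟩

theorem crossesE_leftTr {U V : Set G} (a : G) (h : CrossesE H X U V) :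
    CrossesE H X (leftTr a U) (leftTr a V) := by
  rw [crossesE_iff] at h ⊢
  obtain ⟨h1, h2, h3, h4⟩ := h
  refine ⟨?_, ?_, ?_, ?_⟩
  · intro hsm
    rw [show leftTr a U ∩ leftTr a V = leftTr a (U ∩ V) from by rw [leftTr_inter]] at hsm
    exact h1 ((smallOver_leftTr a).2 hsm)
  · intro hsm
    rw [show leftTr a U ∩ (leftTr a V)ᶜ = leftTr a (U ∩ Vᶜ) from by
      rw [leftTr_inter, leftTr_compl]] at hsm
    exact h2 ((smallOver_leftTr a).2 hsm)
  · intro hsm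
    rw [show (leftTr a U)ᶜ ∩ leftTr a V = leftTr a (Uᶜ ∩ V) from by
      rw [leftTr_inter, leftTr_compl]] at hsm
    exact h3 ((smallOver_leftTr a).2 hsm)
  · intro hsm
    rw [show (leftTr a U)ᶜ ∩ (leftTr a V)ᶜ = leftTr a (Uᶜ ∩ Vᶜ) from by
      rw [leftTr_inter, leftTr_compl, leftTr_compl]] at hsm
    exact h4 ((smallOver_leftTr a).2 hsm)

theorem sameCCC_leftTr {U V : Set G} (a : G) (h : SameCCC H X U V) :
    SameCCC H X (leftTr a U) (leftTr a V) := by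
  induction h with
  | rel x y hxy =>
    obtain ⟨hxT, hyT, hcase⟩ := hxy
    refine Relation.EqvGen.rel _ _ ⟨leftTr_translates a hxT, leftTr_translates a hyT, ?_⟩
    rcases hcase with rfl | rfl | hcross
    · exact Or.inl rfl
    · exact Or.inr (Or.inl (by rw [leftTr_compl]))
    · exact Or.inr (Or.inr (crossesE_leftTr a hcross))
  | refl x => exact Relation.EqvGen.refl _
  | symm x y _ ih => exact Relation.EqvGen.symm _ _ ih
  | trans x y z _ _ ih1 ih2 => exact Relation.EqvGen.trans _ _ _ ih1 ih2

end Translate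

end SSAux
/-- The set `P` of cross-connected components of `Ē`, with the betweenness
relation, is a pretree satisfying axioms (T0)-(T3), and left translation induces an action
of `G` on `P` which preserves betweenness. -/
theorem stmt8 {G : Type*} [Group G] (hGfg : Group.FG G) {n : ℕ}
    (H : Fin n → Subgroup G) (X : Fin n → Set G)
    (hHfg : ∀ i, (H i).FG) (hnt : ∀ i, NontrivialAI (H i) (X i))
    (hgood : GoodPosition H X) :
    -- (T0)
    (∀ A B C : Quotient (cccSetoid H X), BetweenCCC H X A B C → A ≠ C) ∧
    -- (T1)
    (∀ A B C : Quotient (cccSetoid H X), BetweenCCC H X A B C → BetweenCCC H X C B A) ∧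
    -- (T2)
    (∀ A B C : Quotient (cccSetoid H X), BetweenCCC H X A B C → ¬ BetweenCCC H X A C B) ∧
    -- (T3)
    (∀ A B C D : Quotient (cccSetoid H X), BetweenCCC H X A B C → D ≠ B →
      BetweenCCC H X A B D ∨ BetweenCCC H X D B C) ∧
    -- left translation descends to an action on `P` ...
    (∀ (g : G) (U V : Set G), SameCCC H X U V → SameCCC H X (leftTr g U) (leftTr g V)) ∧
    -- ... which preserves betweenness
    (∀ (g : G) (u v w : {U : Set G // U ∈ Translates X}),
      BetweenCCC H X (Quotient.mk (cccSetoid H X) u) (Quotient.mk (cccSetoid H X) v)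
        (Quotient.mk (cccSetoid H X) w) →
      BetweenCCC H X (Quotient.mk (cccSetoid H X) (translateE X g u))
        (Quotient.mk (cccSetoid H X) (translateE X g v))
        (Quotient.mk (cccSetoid H X) (translateE X g w))) := by
  classical
  obtain ⟨S, hS⟩ : ∃ S : Finset G, Subgroup.closure (S : Set G) = ⊤ := by
    obtain ⟨S0, hS0, hfin⟩ := Group.fg_iff.1 hGfg
    exact ⟨hfin.toFinset, by rwa [Set.Finite.coe_toFinset]⟩
  have hinj : ∀ (g : G) (p q : {U : Set G // U ∈ Translates X}),
      Quotient.mk (cccSetoid H X) (translateE X g p) =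
        Quotient.mk (cccSetoid H X) (translateE X g q) →
      Quotient.mk (cccSetoid H X) p = Quotient.mk (cccSetoid H X) q := by
    intro g p q he
    apply Quotient.sound
    have h1 : SameCCC H X (leftTr g p.1) (leftTr g q.1) := Quotient.exact he
    have h2 := sameCCC_leftTr g⁻¹ h1
    rwa [leftTr_leftTr, leftTr_leftTr, inv_mul_cancel, leftTr_one', leftTr_one'] at h2
  refine ⟨?_, ?_, ?_, ?_, ?_, ?_⟩
  · -- T0
    exact fun A B C h => h.2.2.1
  · -- T1
    rintro A B C ⟨hAB, hBC, hAC, u, v, w, hu, hv, hw, huv, hvw⟩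
    refine ⟨hBC.symm, hAB.symm, hAC.symm,
      ⟨w.1ᶜ, translates_compl w.2⟩, ⟨v.1ᶜ, translates_compl v.2⟩,
      ⟨u.1ᶜ, translates_compl u.2⟩, ?_, ?_, ?_, ?_, ?_⟩
    · rw [← hw]
      exact Quotient.sound (Relation.EqvGen.symm _ _ (sameCCC_compl w.2))
    · rw [← hv]
      exact Quotient.sound (Relation.EqvGen.symm _ _ (sameCCC_compl v.2))
    · rw [← hu]
      exact Quotient.sound (Relation.EqvGen.symm _ _ (sameCCC_compl u.2))
    · exact ⟨eLE_flip S hS hnt v.2 w.2 hvw.1,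
        fun he => hvw.2 (compl_inj_iff.1 he).symm⟩
    · exact ⟨eLE_flip S hS hnt u.2 v.2 huv.1,
        fun he => huv.2 (compl_inj_iff.1 he).symm⟩
  · -- T2
    rintro A B C ⟨hAB, hBC, hAC, u, v, w, hu, hv, hw, huv, hvw⟩
      ⟨_, _, _, x, y, z, hx, hy, hz, hxy, hyz⟩
    -- x ∈ A, y ∈ C, z ∈ B
    have hsame_wy : SameCCC H X w.1 y.1 := Quotient.exact (hw.trans hy.symm)
    have hnsvw : ¬ SameCCC H X v.1 w.1 := fun h =>
      hBC (by rw [← hv, ← hw]; exact Quotient.sound h)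
    have hupy : SideUp H X v.1 y.1 := by
      rcases side_eqv S hS hnt hgood v.2 hsame_wy with heq | ⟨_, _, hiff⟩
      · rw [← heq]; exact Or.inl hvw.1
      · exact (hiff hnsvw).1.1 (Or.inl hvw.1)
    have hsame_zv : SameCCC H X z.1 v.1 := Quotient.exact (hz.trans hv.symm)
    have hnsyz : ¬ SameCCC H X y.1 z.1 := fun h =>
      hBC (by rw [← hz, ← hy]; exact (Quotient.sound h).symm)
    have hupv : SideUp H X y.1 v.1 := by
      rcases side_eqv S hS hnt hgood y.2 hsame_zv with heq | ⟨_, _, hiff⟩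
      · rw [← heq]; exact Or.inl hyz.1
      · exact (hiff hnsyz).1.1 (Or.inl hyz.1)
    have hnsvy : ¬ SameCCC H X v.1 y.1 := fun h =>
      hBC (by rw [← hv, ← hy]; exact Quotient.sound h)
    have hkey : eLE H X v.1 y.1ᶜ ∧ eLE H X y.1 v.1ᶜ := by
      rcases hupy with h1 | h1 <;> rcases hupv with h2 | h2
      · exact absurd (eLE_antisymm S hS hnt v.2 y.2 h1 h2) (ne_of_not_same hnsvy)
      · exact absurd (eLE_trans S hS hnt hgood v.2 y.2 (translates_compl v.2) h1 h2)
          (fun hc => not_eLE_self_compl S hS hnt v.2 hc)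
      · exact absurd (eLE_trans S hS hnt hgood y.2 v.2 (translates_compl y.2) h2 h1)
          (fun hc => not_eLE_self_compl S hS hnt y.2 hc)
      · exact ⟨h1, h2⟩
    have hsame_ux : SameCCC H X u.1 x.1 := Quotient.exact (hu.trans hx.symm)
    have hnsvu : ¬ SameCCC H X v.1 u.1 := fun h =>
      hAB (by rw [← hu, ← hv]; exact (Quotient.sound h).symm)
    have hdnx : SideDn H X v.1 x.1 := by
      rcases side_eqv S hS hnt hgood v.2 hsame_ux with heq | ⟨_, _, hiff⟩
      · rw [← heq]; exact Or.inl huv.1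
      · exact (hiff hnsvu).2.1 (Or.inl huv.1)
    rcases hdnx with hxv | hxv
    · have hxyc : eLE H X x.1 y.1ᶜ :=
        eLE_trans S hS hnt hgood x.2 v.2 (translates_compl y.2) hxv hkey.1
      exact eLE_not_both S hS hnt x.2 y.2 hxy.1 hxyc
    · have h1 : eLE H X x.1ᶜ y.1ᶜ :=
        eLE_trans S hS hnt hgood (translates_compl x.2) v.2 (translates_compl y.2)
          hxv hkey.1
      have h2 := eLE_flip S hS hnt (translates_compl x.2) (translates_compl y.2) h1
      rw [compl_compl, compl_compl] at h2
      have hxy' := eLE_antisymm S hS hnt x.2 y.2 hxy.1 h2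
      refine hAC ?_
      rw [← hx, ← hy]
      refine Quotient.sound ?_
      show SameCCC H X x.1 y.1
      rw [hxy']
      exact Relation.EqvGen.refl _
  · -- T3
    intro A B C D hABC hDB
    by_cases hDA : D = A
    · right; rw [hDA]; exact hABC
    by_cases hDC : D = C
    · left; rw [hDC]; exact hABC
    obtain ⟨hAB, hBC, hAC, u, v, w, hu, hv, hw, huv, hvw⟩ := hABC
    obtain ⟨d, hd⟩ := Quotient.exists_rep D
    have hnsvd : ¬ SameCCC H X v.1 d.1 := by
      intro h
      exact hDB (by rw [← hd, ← hv]; exact (Quotient.sound h).symm)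
    obtain ⟨Aor, Bor, hAor, hBor, hle⟩ := at_least_one S hS hnt hgood v.2 d.2 hnsvd
    have hBorT : Bor ∈ Translates X := translates_orient hBor d.2
    have hBorClass : Quotient.mk (cccSetoid H X) (⟨Bor, hBorT⟩ : {U : Set G // U ∈ Translates X}) = D := by
      rw [← hd]
      exact Quotient.sound (Relation.EqvGen.symm _ _ (sameCCC_orient d.2 hBor))
    have hne_vBor : v.1 ≠ Bor := by
      intro he
      apply hnsvd
      rw [he]
      exact Relation.EqvGen.symm _ _ (sameCCC_orient d.2 hBor)
    rcases hAor with heq | heq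
    · -- Aor = v.1 : eLE v Bor, so A B D
      left
      refine ⟨hAB, fun h => hDB h.symm, fun h => hDA h.symm, u, v, ⟨Bor, hBorT⟩,
        hu, hv, hBorClass, huv, ⟨by rw [← heq]; exact hle, hne_vBor⟩⟩
    · -- Aor = v.1ᶜ : eLE Borᶜ v, so D B C
      right
      have hflip := eLE_flip S hS hnt (translates_orient (Or.inr rfl) v.2) hBorT
        (by rw [← heq]; exact hle)
      rw [compl_compl] at hflip
      refine ⟨hDB, hBC, hDC, ⟨Borᶜ, translates_compl hBorT⟩, v, w, ?_, hv, hw,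
        ⟨hflip, ?_⟩, hvw⟩
      · rw [← hd]
        refine Quotient.sound (Relation.EqvGen.trans _ _ _
          (Relation.EqvGen.symm _ _ (sameCCC_compl hBorT))
          (Relation.EqvGen.symm _ _ (sameCCC_orient d.2 hBor)))
      · intro he
        apply hnsvd
        rw [← he]
        exact Relation.EqvGen.trans _ _ _
          (Relation.EqvGen.symm _ _ (sameCCC_compl hBorT))
          (Relation.EqvGen.symm _ _ (sameCCC_orient d.2 hBor))
  · -- action on SameCCC
    exact fun g U V h => sameCCC_leftTr g h
  · -- preservation of betweenness
    rintro g u v w ⟨hAB, hBC, hAC, u', v', w', hu', hv', hw', h1, h2⟩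
    refine ⟨fun he => hAB (hinj g u v he), fun he => hBC (hinj g v w he),
      fun he => hAC (hinj g u w he),
      translateE X g u', translateE X g v', translateE X g w', ?_, ?_, ?_,
      eLT_leftTr g h1, eLT_leftTr g h2⟩
    · exact Quotient.sound (sameCCC_leftTr g (Quotient.exact hu'))
    · exact Quotient.sound (sameCCC_leftTr g (Quotient.exact hv'))
    · exact Quotient.sound (sameCCC_leftTr g (Quotient.exact hw'))
end

section
/- Let G be a group acting without inversions on a tree T, transitively on the unoriented edges of T, and with no vertex of T fixed by all of G (so the action corresponds to a splitting of G over the stabiliser of an edge). Let s = (u,v) be an oriented edge of T and let X = {g ∈ G : g·v ∈ Y_s}. Then either there is an element g ∈ G with gX ⊆ X* (i.e. gX ∩ X = ∅), or the stabiliser of the edge s equals the stabiliser of one of its endpoints and u and v lie in the same G-orbit (the splitting is an ascending HNN extension). -/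
section Aux

open SimpleGraph

lemma notReach_of_tree {V : Type*} {T : SimpleGraph V} (htree : T.IsTree) {u v : V}
    (h : T.Adj u v) : ¬ (T.deleteEdges {s(u,v)}).Reachable v u := by
  have hb := (isAcyclic_iff_forall_adj_isBridge.mp htree.IsAcyclic) h
  rw [isBridge_iff] at hb
  intro hr
  exact hb hr.symm

lemma halfTree_disjoint {V : Type*} {T : SimpleGraph V} (htree : T.IsTree) {u v v' : V}
    (huv : T.Adj u v) (huv' : T.Adj u v') (hne : v ≠ v') :
    halfTree T u v ∩ halfTree T u v' = ∅ := by
  classical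
  ext w
  simp only [Set.mem_inter_iff, Set.mem_empty_iff_false, iff_false, not_and]
  intro h1 h2
  obtain ⟨p⟩ := h1
  obtain ⟨q⟩ := h2
  -- transfer walks to T
  have hpe : ∀ e ∈ p.edges, e ∈ T.edgeSet ∧ e ≠ s(u,v) := by
    intro e he
    have := p.edges_subset_edgeSet he
    rw [SimpleGraph.edgeSet_deleteEdges] at this
    exact ⟨this.1, by simpa using this.2⟩
  have hqe : ∀ e ∈ q.edges, e ∈ T.edgeSet ∧ e ≠ s(u,v') := by
    intro e he
    have := q.edges_subset_edgeSet he
    rw [SimpleGraph.edgeSet_deleteEdges] at this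
    exact ⟨this.1, by simpa using this.2⟩
  let p' : T.Walk v w := p.transfer T (fun e he => (hpe e he).1)
  let q' : T.Walk v' w := q.transfer T (fun e he => (hqe e he).1)
  have hp'e : s(u,v) ∉ p'.edges := by
    rw [Walk.edges_transfer]
    intro h
    exact (hpe _ h).2 rfl
  have hq'e : s(u,v') ∉ q'.edges := by
    rw [Walk.edges_transfer]
    intro h
    exact (hqe _ h).2 rfl
  -- pass to paths
  have hP1e : s(u,v) ∉ (p'.toPath : T.Walk v w).edges :=
    fun h => hp'e (Walk.edges_toPath_subset p' h)
  have hP2e : s(u,v') ∉ (q'.toPath : T.Walk v' w).edges :=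
    fun h => hq'e (Walk.edges_toPath_subset q' h)
  have hu1 : u ∉ (p'.toPath : T.Walk v w).support := by
    intro hu
    have hsub := Walk.edges_takeUntil_subset (p'.toPath : T.Walk v w) hu
    have havoid : ∀ e ∈ ((p'.toPath : T.Walk v w).takeUntil u hu).edges,
        e ∉ ({s(u,v)} : Set (Sym2 V)) := by
      intro e he hc
      rw [Set.mem_singleton_iff] at hc
      exact hP1e (hc ▸ hsub he)
    exact notReach_of_tree htree huv
      ⟨((p'.toPath : T.Walk v w).takeUntil u hu).toDeleteEdges _ havoid⟩
  have hu2 : u ∉ (q'.toPath : T.Walk v' w).support := by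
    intro hu
    have hsub := Walk.edges_takeUntil_subset (q'.toPath : T.Walk v' w) hu
    have havoid : ∀ e ∈ ((q'.toPath : T.Walk v' w).takeUntil u hu).edges,
        e ∉ ({s(u,v')} : Set (Sym2 V)) := by
      intro e he hc
      rw [Set.mem_singleton_iff] at hc
      exact hP2e (hc ▸ hsub he)
    exact notReach_of_tree htree huv'
      ⟨((q'.toPath : T.Walk v' w).takeUntil u hu).toDeleteEdges _ havoid⟩
  let C1 : T.Path u w := ⟨Walk.cons huv (p'.toPath : T.Walk v w), p'.toPath.2.cons hu1⟩
  let C2 : T.Path u w := ⟨Walk.cons huv' (q'.toPath : T.Walk v' w), q'.toPath.2.cons hu2⟩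
  have hC : C1 = C2 := htree.IsAcyclic.path_unique C1 C2
  have hsupp := congrArg (fun P : T.Path u w => (P : T.Walk u w).support) hC
  simp only [C1, C2, Walk.support_cons] at hsupp
  rw [(p'.toPath : T.Walk v w).support_eq_cons, (q'.toPath : T.Walk v' w).support_eq_cons]
    at hsupp
  rw [List.cons.injEq, List.cons.injEq] at hsupp
  exact hne hsupp.2.1

lemma halfTree_smul {G V : Type*} [Group G] [MulAction G V] {T : SimpleGraph V}
    (hadj : ∀ (g : G) (x y : V), T.Adj x y → T.Adj (g • x) (g • y))
    (g : G) (u v : V) {x : V} (hx : x ∈ halfTree T u v) :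
    g • x ∈ halfTree T (g • u) (g • v) := by
  refine SimpleGraph.Reachable.map
    (⟨fun z => g • z, ?_⟩ : T.deleteEdges {s(u,v)} →g T.deleteEdges {s(g • u, g • v)}) hx
  intro a b hab
  simp only [SimpleGraph.deleteEdges_adj, Set.mem_singleton_iff] at hab ⊢
  refine ⟨hadj g a b hab.1, ?_⟩
  intro hcontra
  apply hab.2
  rw [Sym2.eq_iff] at hcontra ⊢
  rcases hcontra with ⟨h1, h2⟩ | ⟨h1, h2⟩
  · exact Or.inl ⟨smul_left_cancel g h1, smul_left_cancel g h2⟩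
  · exact Or.inr ⟨smul_left_cancel g h1, smul_left_cancel g h2⟩

end Aux

/-- For a splitting of `G` (a `G`-tree with edge-transitive action and no
global fixed vertex) with oriented edge `s = (u,v)` and associated set
`X = {g | g·v ∈ Y_s}`, either some translate `gX` is contained in `X*`, or the splitting
is an ascending HNN extension: the stabiliser of `s` equals the stabiliser of one of its
endpoints and `u`, `v` lie in the same `G`-orbit. -/
theorem stmt11 {G V : Type*} [Group G] [MulAction G V] (T : SimpleGraph V)
    (htree : T.IsTree)
    (hadj : ∀ (g : G) (x y : V), T.Adj x y → T.Adj (g • x) (g • y))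
    (hinv : ∀ (g : G) (x y : V), T.Adj x y → ¬(g • x = y ∧ g • y = x))
    (htrans : ∀ a b c d : V, T.Adj a b → T.Adj c d →
      ∃ g : G, (g • a = c ∧ g • b = d) ∨ (g • a = d ∧ g • b = c))
    (hnofix : ∀ w : V, ∃ g : G, g • w ≠ w)
    (u v : V) (he : T.Adj u v) :
    (∃ g : G, leftTr g (Zset T v u v) ∩ Zset T v u v = ∅) ∨
    ((MulAction.stabilizer G u ⊓ MulAction.stabilizer G v = MulAction.stabilizer G u ∨
        MulAction.stabilizer G u ⊓ MulAction.stabilizer G v = MulAction.stabilizer G v) ∧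
      ∃ g : G, g • u = v) := by
  classical
  by_cases h1 : ∃ a : G, a • u = u ∧ a • v ≠ v
  · obtain ⟨a, hau, hav⟩ := h1
    left
    refine ⟨a, ?_⟩
    ext k
    simp only [Set.mem_inter_iff, Set.mem_empty_iff_false, iff_false, not_and]
    intro hk1 hk2
    obtain ⟨x, hx, rfl⟩ := hk1
    have hx' : x • v ∈ halfTree T u v := hx
    have h3 : (a * x) • v ∈ halfTree T (a • u) (a • v) := by
      rw [mul_smul]; exact halfTree_smul hadj a u v hx'
    rw [hau] at h3
    have huv' : T.Adj u (a • v) := by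
      have := hadj a u v he; rwa [hau] at this
    have hne : v ≠ a • v := fun h => hav h.symm
    have hD := halfTree_disjoint htree he huv' hne
    have hmem : (a * x) • v ∈ halfTree T u v ∩ halfTree T u (a • v) := ⟨hk2, h3⟩
    rw [hD] at hmem
    exact hmem
  · push_neg at h1
    by_cases h2 : ∃ g : G, g • u = v
    · right
      refine ⟨Or.inl (le_antisymm inf_le_left (le_inf le_rfl ?_)), h2⟩
      intro a ha
      exact h1 a ha
    · exfalso
      push_neg at h2
      have hC2 : ∀ w, T.Adj u w → w = v := by
        intro w hw
        obtain ⟨h, hh⟩ := htrans u v u w he hw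
        rcases hh with ⟨h1', h2'⟩ | ⟨h1', h2'⟩
        · rw [← h2']; exact h1 h h1'
        · exact absurd (by rw [← h2', inv_smul_smul]) (h2 h⁻¹)
      have hC : ∀ w, T.Adj v w → ∃ h : G, h • v = v ∧ h • u = w := by
        intro w hw
        obtain ⟨h, hh⟩ := htrans u v v w he hw
        rcases hh with ⟨h1', _⟩ | ⟨h1', h2'⟩
        · exact absurd h1' (h2 h)
        · exact ⟨h, h2', h1'⟩
      have hC3 : ∀ w, T.Adj v w → ∀ x, T.Adj w x → x = v := by
        intro w hw x hx
        obtain ⟨h, hv', hu'⟩ := hC w hw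
        have hadj' := hadj h⁻¹ w x hx
        rw [← hu', inv_smul_smul] at hadj'
        have hx' := hC2 _ hadj'
        calc x = h • (h⁻¹ • x) := (smul_inv_smul h x).symm
          _ = h • v := by rw [hx']
          _ = v := hv'
      have hreach : ∀ (x w : V), T.Walk x w → (x = v ∨ T.Adj v x) → (w = v ∨ T.Adj v w) := by
        intro x w p
        induction p with
        | nil => exact fun h => h
        | @cons a b c hab q ih =>
          intro hx
          apply ih
          rcases hx with rfl | hx
          · exact Or.inr hab
          · exact Or.inl (hC3 a hx b hab)
      obtain ⟨g, hg⟩ := hnofix v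
      obtain ⟨p⟩ := htree.isConnected.preconnected v (g • v)
      rcases hreach v (g • v) p (Or.inl rfl) with h | h
      · exact hg h
      · obtain ⟨h', hv', hu'⟩ := hC _ h
        exact h2 (g⁻¹ * h') (by rw [mul_smul, hu', inv_smul_smul])
end

section
/- Let G be a group acting on a tree T without inversions, fix a base vertex b of T, let H be a subgroup of G, let v be a vertex of T, and let A and B be nontrivial H-almost invariant subsets of G which are both enclosed by v. Then A∪B, A∩B and the symmetric difference A+B are each H-almost invariant, and each of them that is nontrivial is enclosed by v. -/
section Aux

variable {G : Type*} [Group G]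

theorem hfMono {H : Subgroup G} {W W' : Set G} (h : HFinite H W') (sub : W ⊆ W') :
    HFinite H W := by
  obtain ⟨F, hF⟩ := h
  exact ⟨F, sub.trans hF⟩

theorem hfUnion {H : Subgroup G} {W₁ W₂ : Set G} (h₁ : HFinite H W₁) (h₂ : HFinite H W₂) :
    HFinite H (W₁ ∪ W₂) := by
  classical
  obtain ⟨F₁, hF₁⟩ := h₁
  obtain ⟨F₂, hF₂⟩ := h₂
  refine ⟨F₁ ∪ F₂, Set.union_subset ?_ ?_⟩
  · exact hF₁.trans (Set.iUnion₂_mono' fun g hg => ⟨g, Finset.mem_union_left _ hg, subset_rfl⟩)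
  · exact hF₂.trans (Set.iUnion₂_mono' fun g hg => ⟨g, Finset.mem_union_right _ hg, subset_rfl⟩)

theorem symmDiff_union_sub (A A' B B' : Set G) :
    symmDiff (A ∪ B) (A' ∪ B') ⊆ symmDiff A A' ∪ symmDiff B B' := by
  intro x hx
  simp only [Set.mem_symmDiff, Set.mem_union] at *
  tauto

theorem symmDiff_inter_sub (A A' B B' : Set G) :
    symmDiff (A ∩ B) (A' ∩ B') ⊆ symmDiff A A' ∪ symmDiff B B' := by
  intro x hx
  simp only [Set.mem_symmDiff, Set.mem_union, Set.mem_inter_iff] at *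
  tauto

theorem symmDiff_symmDiff_sub (A A' B B' : Set G) :
    symmDiff (symmDiff A B) (symmDiff A' B') ⊆ symmDiff A A' ∪ symmDiff B B' := by
  intro x hx
  simp only [Set.mem_symmDiff, Set.mem_union] at *
  tauto

end Aux

/-- If `A` and `B` are nontrivial `H`-almost invariant sets enclosed by a
vertex `v` of a `G`-tree, then `A ∪ B`, `A ∩ B` and `A + B` are `H`-almost invariant and,
when nontrivial, enclosed by `v`. -/
theorem stmt18 {G V : Type*} [Group G] [MulAction G V] (T : SimpleGraph V)
    (htree : T.IsTree)
    (hadj : ∀ (g : G) (x y : V), T.Adj x y → T.Adj (g • x) (g • y))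
    (hinv : ∀ (g : G) (x y : V), T.Adj x y → ¬(g • x = y ∧ g • y = x))
    (b : V) (H : Subgroup G) (v : V) (A B : Set G)
    (hA : NontrivialAI H A) (hB : NontrivialAI H B)
    (hencA : Encloses T b H v A) (hencB : Encloses T b H v B) :
    AlmostInv H (A ∪ B) ∧ AlmostInv H (A ∩ B) ∧ AlmostInv H (symmDiff A B) ∧
    ((¬ HFinite H (A ∪ B) ∧ ¬ HFinite H (A ∪ B)ᶜ) → Encloses T b H v (A ∪ B)) ∧
    ((¬ HFinite H (A ∩ B) ∧ ¬ HFinite H (A ∩ B)ᶜ) → Encloses T b H v (A ∩ B)) ∧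
    ((¬ HFinite H (symmDiff A B) ∧ ¬ HFinite H (symmDiff A B)ᶜ) →
      Encloses T b H v (symmDiff A B)) := by
  obtain ⟨⟨hAinv, hAfin⟩, -, -⟩ := hA
  obtain ⟨⟨hBinv, hBfin⟩, -, -⟩ := hB
  have himg : ∀ (g : G) (X Y : Set G), (· * g) '' (X ∪ Y) = ((· * g) '' X) ∪ ((· * g) '' Y) :=
    fun g X Y => Set.image_union _ _ _
  have himgi : ∀ (g : G) (X Y : Set G), (· * g) '' (X ∩ Y) = ((· * g) '' X) ∩ ((· * g) '' Y) :=
    fun g X Y => Set.image_inter (mul_left_injective g)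
  have himgs : ∀ (g : G) (X Y : Set G),
      (· * g) '' (symmDiff X Y) = symmDiff ((· * g) '' X) ((· * g) '' Y) :=
    fun g X Y => Set.image_symmDiff (mul_left_injective g) X Y
  have hlimg : ∀ (h : G) (X Y : Set G), leftTr h (X ∩ Y) = leftTr h X ∩ leftTr h Y :=
    fun h X Y => Set.image_inter (mul_right_injective h)
  have hlimgs : ∀ (h : G) (X Y : Set G),
      leftTr h (symmDiff X Y) = symmDiff (leftTr h X) (leftTr h Y) :=
    fun h X Y => Set.image_symmDiff (mul_right_injective h) X Y
  refine ⟨⟨?_, ?_⟩, ⟨?_, ?_⟩, ⟨?_, ?_⟩, ?_, ?_, ?_⟩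
  · intro h hh
    rw [show leftTr h (A ∪ B) = leftTr h A ∪ leftTr h B from Set.image_union _ _ _,
      hAinv h hh, hBinv h hh]
  · intro g
    rw [himg g A B]
    exact hfMono (hfUnion (hAfin g) (hBfin g)) (symmDiff_union_sub _ _ _ _)
  · intro h hh
    rw [hlimg h A B, hAinv h hh, hBinv h hh]
  · intro g
    rw [himgi g A B]
    exact hfMono (hfUnion (hAfin g) (hBfin g)) (symmDiff_inter_sub _ _ _ _)
  · intro h hh
    rw [hlimgs h A B, hAinv h hh, hBinv h hh]
  · intro g
    rw [himgs g A B]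
    exact hfMono (hfUnion (hAfin g) (hBfin g)) (symmDiff_symmDiff_sub _ _ _ _)
  · intro _ u hu
    rcases hencA u hu with hA' | hA'
    · rcases hencB u hu with hB' | hB'
      · refine Or.inl (hfMono (hfUnion hA' hB') ?_)
        intro x hx
        simp only [Set.mem_union, Set.mem_inter_iff] at *
        tauto
      · refine Or.inr (hfMono hB' ?_)
        intro x hx
        simp only [Set.mem_union, Set.mem_inter_iff, Set.mem_compl_iff] at *
        tauto
    · refine Or.inr (hfMono hA' ?_)
      intro x hx
      simp only [Set.mem_union, Set.mem_inter_iff, Set.mem_compl_iff] at *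
      tauto
  · intro _ u hu
    rcases hencA u hu with hA' | hA'
    · refine Or.inl (hfMono hA' ?_)
      intro x hx
      simp only [Set.mem_inter_iff] at *
      tauto
    · rcases hencB u hu with hB' | hB'
      · refine Or.inl (hfMono hB' ?_)
        intro x hx
        simp only [Set.mem_inter_iff] at *
        tauto
      · refine Or.inr (hfMono (hfUnion hA' hB') ?_)
        intro x hx
        simp only [Set.mem_union, Set.mem_inter_iff, Set.mem_compl_iff] at *
        tauto
  · intro _ u hu
    rcases hencA u hu with hA' | hA' <;> rcases hencB u hu with hB' | hB'
    · refine Or.inl (hfMono (hfUnion hA' hB') ?_)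
      intro x hx
      simp only [Set.mem_union, Set.mem_inter_iff, Set.mem_symmDiff, Set.mem_compl_iff] at *
      tauto
    · refine Or.inr (hfMono (hfUnion hA' hB') ?_)
      intro x hx
      simp only [Set.mem_union, Set.mem_inter_iff, Set.mem_symmDiff, Set.mem_compl_iff] at *
      tauto
    · refine Or.inr (hfMono (hfUnion hA' hB') ?_)
      intro x hx
      simp only [Set.mem_union, Set.mem_inter_iff, Set.mem_symmDiff, Set.mem_compl_iff] at *
      tauto
    · refine Or.inl (hfMono (hfUnion hA' hB') ?_)
      intro x hx
      simp only [Set.mem_union, Set.mem_inter_iff, Set.mem_symmDiff, Set.mem_compl_iff] at *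
      tauto
end
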